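/- arXiv:2503.11242 — 4 statements merged into one kernel-verified Lean document; each statement's English description precedes it below -/
import Mathlib

section
/- Fix a constant c > 0 and let p = c/d. There exist a constant C > 0 and d_0 ∈ ℕ such that for every d ≥ d_0 and every integer d' with d - d^{1/4} ≤ d' ≤ d, one has ∑_{i=0}^{⌊d^{1/4}⌋} (1/i!)·|(1-p)^{d'-i}·(∏_{j=0}^{i-1} p(d'-j)) - e^{-c}·c^i| ≤ C·d^{-1/2}, where the empty product (i = 0) is equal to 1. -/
set_option maxHeartbeats 1600000 in
/-- the main sum estimate in the proof of Lemma 3.3.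
Fix `c > 0` and let `p = c/d`. There exist `C > 0` and `d₀` such that for every `d ≥ d₀` and
every integer `d'` with `d - d^{1/4} ≤ d' ≤ d`,
`∑_{i=0}^{⌊d^{1/4}⌋} (1/i!)·|(1-p)^{d'-i}·(∏_{j=0}^{i-1} p(d'-j)) - e^{-c}·c^i| ≤ C·d^{-1/2}`,
the empty product being `1`. -/
theorem sum_estimate (c : ℝ) (hc : 0 < c) :
    ∃ C : ℝ, 0 < C ∧ ∃ d₀ : ℕ, ∀ d : ℕ, d₀ ≤ d → ∀ d' : ℕ,
      (d : ℝ) - (d : ℝ) ^ ((1 : ℝ) / 4) ≤ (d' : ℝ) → d' ≤ d →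
      ∑ i ∈ Finset.range (⌊(d : ℝ) ^ ((1 : ℝ) / 4)⌋₊ + 1),
          (1 / (Nat.factorial i : ℝ)) *
            |(1 - c / d) ^ (d' - i) * (∏ j ∈ Finset.range i, ((c / d) * ((d' : ℝ) - (j : ℝ))))
              - Real.exp (-c) * c ^ i|
        ≤ C * (d : ℝ) ^ (-(1 : ℝ) / 2) := by
  refine ⟨8*c + 4*c^2 + 2, by positivity, ⌈(4*c + 2*c^2)^2⌉₊ + ⌈2*c⌉₊ + 16, ?_⟩
  intro d hd d' hd'1 hd'2
  have hd16 : (16:ℕ) ≤ d := by omega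
  have hd16R : (16:ℝ) ≤ d := by exact_mod_cast hd16
  have hd0 : (0:ℝ) < d := by linarith
  have hdc : 2*c ≤ (d:ℝ) := by
    refine le_trans (Nat.le_ceil _) ?_
    exact_mod_cast (by omega : ⌈2*c⌉₊ ≤ d)
  have hdK : (4*c + 2*c^2)^2 ≤ (d:ℝ) := by
    refine le_trans (Nat.le_ceil _) ?_
    exact_mod_cast (by omega : ⌈(4*c + 2*c^2)^2⌉₊ ≤ d)
  set q := (d:ℝ) ^ ((1:ℝ)/4) with hqdef
  set s := (d:ℝ) ^ ((1:ℝ)/2) with hsdef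
  have hq0 : 0 < q := Real.rpow_pos_of_pos hd0 _
  have hs0 : 0 < s := Real.rpow_pos_of_pos hd0 _
  have hq2 : q^2 = s := by
    rw [hqdef, hsdef, ← Real.rpow_natCast ((d:ℝ) ^ ((1:ℝ)/4)) 2, ← Real.rpow_mul hd0.le]
    norm_num
  have hs2 : s^2 = (d:ℝ) := by
    rw [hsdef, ← Real.rpow_natCast ((d:ℝ) ^ ((1:ℝ)/2)) 2, ← Real.rpow_mul hd0.le]
    norm_num
  clear_value q s
  have hs4 : 4 ≤ s := by
    by_contra h
    push_neg at h
    have h2 : (0:ℝ) < (4 - s) * (4 + s) := mul_pos (by linarith) (by linarith)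
    linarith [h2]
  have hq1 : 2 ≤ q := by
    by_contra h
    push_neg at h
    have h2 : (0:ℝ) < (2 - q) * (2 + q) := mul_pos (by linarith) (by linarith)
    linarith [h2]
  have hqs : q ≤ s := by
    have h2 : (0:ℝ) ≤ q * (q - 1) := mul_nonneg hq0.le (by linarith)
    linarith [h2]
  have h2sd : 2*s ≤ (d:ℝ) := by
    have h2 : (0:ℝ) ≤ s * (s - 2) := mul_nonneg hs0.le (by linarith)
    linarith [h2]
  have h2qd : 2*q ≤ (d:ℝ) := by linarith
  set x := c / (d:ℝ) with hxdef
  have hx0 : 0 < x := by positivity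
  have hx12 : x ≤ 1/2 := by rw [hxdef, div_le_iff₀ hd0]; linarith
  have h1x : (0:ℝ) < 1 - x := by linarith
  have hdx : (d:ℝ) * x = c := by rw [hxdef]; field_simp
  set L := Real.log (1 - x) with hLdef
  have hLneg : L ≤ 0 := Real.log_nonpos (by linarith) (by linarith)
  have hinv : (1-x)⁻¹ ≤ 2 := by
    rw [inv_le_comm₀ h1x (by norm_num)]
    linarith
  have hLle : -L ≤ 2*x := by
    have h1 : -L = Real.log (1-x)⁻¹ := (Real.log_inv _).symm
    have h2 : Real.log (1-x)⁻¹ ≤ (1-x)⁻¹ - 1 := Real.log_le_sub_one_of_pos (inv_pos.mpr h1x)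
    have h3 : (1-x)⁻¹ - 1 = x * (1-x)⁻¹ := by field_simp; ring
    have h4 : x * (1-x)⁻¹ ≤ x * 2 := mul_le_mul_of_nonneg_left hinv hx0.le
    linarith
  have habsL : |L| ≤ 2*x := by rw [abs_of_nonpos hLneg]; exact hLle
  have hLx : |x + L| ≤ 2*x^2 := by
    have hxlt : |x| < 1 := by rw [abs_of_pos hx0]; linarith
    have h0 := Real.abs_log_sub_add_sum_range_le hxlt 1
    simp only [Finset.sum_range_one, pow_one] at h0
    rw [abs_of_pos hx0] at h0
    have h5 : x^(0+1)/((0:ℕ)+1) = x := by norm_num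
    have h6 : x^(1+1) = x^2 := by ring
    rw [h5, h6] at h0
    have h7 : x^2 / (1-x) = x^2 * (1-x)⁻¹ := by ring
    have h8 : x^2 * (1-x)⁻¹ ≤ x^2 * 2 := mul_le_mul_of_nonneg_left hinv (by positivity)
    calc |x + L| = |x + Real.log (1-x)| := by rw [hLdef]
      _ ≤ x^2 / (1 - x) := h0
      _ ≤ 2*x^2 := by rw [h7]; linarith
  clear_value x L
  have hK1 : 4*c + 2*c^2 ≤ s := by
    refine le_of_pow_le_pow_left₀ two_ne_zero hs0.le ?_
    rw [hs2]; exact hdK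
  -- per-term bound
  have key : ∀ i ∈ Finset.range (⌊q⌋₊ + 1),
      (1 / (Nat.factorial i : ℝ)) *
          |(1 - x) ^ (d' - i) * (∏ j ∈ Finset.range i, (x * ((d' : ℝ) - (j : ℝ))))
            - Real.exp (-c) * c ^ i|
      ≤ Real.exp (-c) * ((8*c + 4*c^2 + 2)/s) * (c^i / (Nat.factorial i : ℝ)) := by
    intro i hi
    have hiq : (i:ℝ) ≤ q := by
      have h1 : i ≤ ⌊q⌋₊ := Nat.lt_succ_iff.mp (Finset.mem_range.mp hi)
      exact le_trans (Nat.cast_le.mpr h1) (Nat.floor_le hq0.le)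
    have hid'R : (i:ℝ) ≤ (d':ℝ) := by linarith
    have hid' : i ≤ d' := by exact_mod_cast hid'R
    have hd'd : (d':ℝ) ≤ d := Nat.cast_le.mpr hd'2
    have hmc : ((d' - i : ℕ):ℝ) = (d':ℝ) - i := by
      rw [Nat.cast_sub hid']
    set P := ∏ j ∈ Finset.range i, ((d':ℝ) - j)/(d:ℝ) with hPdef
    clear_value P
    have hprod : ∏ j ∈ Finset.range i, (x * ((d':ℝ) - j)) = c^i * P := by
      have he : ∀ j ∈ Finset.range i, x * ((d':ℝ) - j) = c * (((d':ℝ) - j)/(d:ℝ)) :=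
        fun j _ => by rw [hxdef]; ring
      rw [Finset.prod_congr rfl he, Finset.prod_mul_distrib, Finset.prod_const,
        Finset.card_range, hPdef]
    have hfac_lb : ∀ j ∈ Finset.range i, 1 - 2*q/(d:ℝ) ≤ ((d':ℝ) - j)/(d:ℝ) := by
      intro j hj
      have hj' : (j:ℝ) ≤ (i:ℝ) := Nat.cast_le.mpr (Finset.mem_range.mp hj).le
      rw [le_div_iff₀ hd0]
      have he : (1 - 2*q/(d:ℝ)) * d = d - 2*q := by field_simp
      rw [he]; linarith
    have hfac_ub : ∀ j ∈ Finset.range i, ((d':ℝ) - j)/(d:ℝ) ≤ 1 := by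
      intro j hj
      rw [div_le_one hd0]
      have : (0:ℝ) ≤ (j:ℝ) := Nat.cast_nonneg j
      linarith
    have hqd01 : 2*q/(d:ℝ) ≤ 1 := by rw [div_le_one hd0]; linarith
    have hqd00 : 0 ≤ 1 - 2*q/(d:ℝ) := by linarith
    have hP_le1 : P ≤ 1 := by
      rw [hPdef]
      exact Finset.prod_le_one (fun j hj => le_trans hqd00 (hfac_lb j hj)) hfac_ub
    have hP_lb : 1 - 2/s ≤ P := by
      have h1 : (1 - 2*q/(d:ℝ))^i ≤ P := by
        calc (1 - 2*q/(d:ℝ))^i = ∏ _j ∈ Finset.range i, (1 - 2*q/(d:ℝ)) := by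
              rw [Finset.prod_const, Finset.card_range]
          _ ≤ P := by rw [hPdef]; exact Finset.prod_le_prod (fun j _ => hqd00) hfac_lb
      have h2 : 1 - (i:ℝ)*(2*q/(d:ℝ)) ≤ (1 - 2*q/(d:ℝ))^i := by
        have := one_add_mul_le_pow (a := -(2*q/(d:ℝ))) (by linarith) i
        calc 1 - (i:ℝ)*(2*q/(d:ℝ)) = 1 + (i:ℝ)*(-(2*q/(d:ℝ))) := by ring
          _ ≤ (1 + -(2*q/(d:ℝ)))^i := this
          _ = (1 - 2*q/(d:ℝ))^i := by ring_nf
      have h3 : (i:ℝ)*(2*q/(d:ℝ)) ≤ 2/s := by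
        have h4 : (i:ℝ)*(2*q/(d:ℝ)) ≤ q*(2*q/(d:ℝ)) :=
          mul_le_mul_of_nonneg_right hiq (by positivity)
        have h5 : q*(2*q/(d:ℝ)) = 2/s := by
          have he : q*(2*q/(d:ℝ)) = 2*q^2/(d:ℝ) := by ring
          rw [he, hq2, ← hs2, sq, div_eq_div_iff (by positivity) hs0.ne']
          ring
        linarith
      linarith
    have hP0 : 0 ≤ P := by
      have h6 : 2/s ≤ 1 := by rw [div_le_one hs0]; linarith
      linarith
    -- exponential part
    set M := ((d' - i : ℕ):ℝ) with hMdef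
    have hpow : (1 - x) ^ (d' - i) = Real.exp (M * L) := by
      rw [hMdef, hLdef, Real.exp_nat_mul, Real.exp_log h1x]
    clear_value M
    have hM_lb : (d:ℝ) - 2*q ≤ M := by rw [hmc]; linarith
    have hM_ub : M ≤ (d:ℝ) := by
      rw [hmc]
      have : (0:ℝ) ≤ (i:ℝ) := Nat.cast_nonneg i
      linarith
    set t := M * L + c with htdef
    clear_value t
    have ht : |t| ≤ (4*c + 2*c^2)/s := by
      have he : t = (M - d)*L + (d:ℝ)*(x + L) := by
        rw [htdef]; rw [← hdx]; ring
      have hMd : |M - (d:ℝ)| ≤ 2*q := by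
        rw [abs_le]; constructor <;> [linarith; linarith [hq0]]
      have hstep : |t| ≤ (2*q)*(2*x) + (d:ℝ)*(2*x^2) := by
        rw [he]
        calc |(M - d)*L + (d:ℝ)*(x + L)| ≤ |(M - d)*L| + |(d:ℝ)*(x + L)| := abs_add_le _ _
          _ = |M - (d:ℝ)| * |L| + (d:ℝ) * |x + L| := by
              rw [abs_mul, abs_mul, abs_of_pos hd0]
          _ ≤ (2*q)*(2*x) + (d:ℝ)*(2*x^2) := by
              have g1 : |M - (d:ℝ)| * |L| ≤ (2*q)*(2*x) :=
                mul_le_mul hMd habsL (abs_nonneg _) (by positivity)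
              have g2 : (d:ℝ) * |x + L| ≤ (d:ℝ)*(2*x^2) :=
                mul_le_mul_of_nonneg_left hLx hd0.le
              linarith
      have hfin : (2*q)*(2*x) + (d:ℝ)*(2*x^2) ≤ (4*c + 2*c^2)/s := by
        have hxe : x = c/(s^2) := by rw [hxdef, hs2]
        have he2 : (2*q)*(2*x) + (d:ℝ)*(2*x^2) = (4*q*c + 2*c^2)/s^2 := by
          rw [hxe, ← hs2]; field_simp; ring
        rw [he2, div_le_div_iff₀ (by positivity) hs0]
        have g1 : (0:ℝ) ≤ 4*c*s*(s-q) := by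
          have := mul_nonneg (mul_nonneg hc.le hs0.le) (sub_nonneg.mpr hqs)
          linarith
        have g2 : (0:ℝ) ≤ 2*c^2*s*(s-1) := by
          have := mul_nonneg (mul_nonneg (mul_nonneg hc.le hc.le) hs0.le)
            (by linarith : (0:ℝ) ≤ s - 1)
          linarith [this]
        linarith [g1, g2]
      linarith
    have ht1 : |t| ≤ 1 := by
      refine le_trans ht ?_
      rw [div_le_one hs0]; exact hK1
    have hEexp : |Real.exp t - 1| ≤ 2*((4*c + 2*c^2)/s) := by
      refine le_trans (Real.abs_exp_sub_one_le ht1) ?_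
      linarith [ht]
    -- combine
    have hA : (1 - x) ^ (d' - i) * (∏ j ∈ Finset.range i, (x * ((d':ℝ) - j)))
        = Real.exp (-c) * c^i * (P * Real.exp t) := by
      rw [hpow, hprod, show M * L = t + (-c) by rw [htdef]; ring, Real.exp_add]
      ring
    have hPE : |P * Real.exp t - 1| ≤ (8*c + 4*c^2 + 2)/s := by
      have h1 : P * Real.exp t - 1 = P * (Real.exp t - 1) + (P - 1) := by ring
      calc |P * Real.exp t - 1| = |P * (Real.exp t - 1) + (P - 1)| := by rw [h1]
        _ ≤ |P * (Real.exp t - 1)| + |P - 1| := abs_add_le _ _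
        _ = |P| * |Real.exp t - 1| + |P - 1| := by rw [abs_mul]
        _ ≤ 1 * (2*((4*c + 2*c^2)/s)) + 2/s := by
            have h2s : (0:ℝ) ≤ 2/s := by positivity
            have g1 : |P| ≤ 1 := by rw [abs_le]; constructor <;> linarith
            have g2 : |P - 1| ≤ 2/s := by rw [abs_le]; constructor <;> linarith
            have g3 : |P| * |Real.exp t - 1| ≤ 1 * (2*((4*c + 2*c^2)/s)) :=
              mul_le_mul g1 hEexp (abs_nonneg _) one_pos.le
            linarith
        _ = (8*c + 4*c^2 + 2)/s := by field_simp; ring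
    have hterm : |(1 - x) ^ (d' - i) * (∏ j ∈ Finset.range i, (x * ((d':ℝ) - j)))
        - Real.exp (-c) * c^i| ≤ Real.exp (-c) * c^i * ((8*c + 4*c^2 + 2)/s) := by
      rw [hA, show Real.exp (-c) * c^i * (P * Real.exp t) - Real.exp (-c) * c^i
          = Real.exp (-c) * c^i * (P * Real.exp t - 1) by ring, abs_mul,
        abs_of_nonneg (by positivity : (0:ℝ) ≤ Real.exp (-c) * c^i)]
      exact mul_le_mul_of_nonneg_left hPE (by positivity)
    calc (1 / (Nat.factorial i : ℝ)) *
          |(1 - x) ^ (d' - i) * (∏ j ∈ Finset.range i, (x * ((d' : ℝ) - (j : ℝ))))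
            - Real.exp (-c) * c ^ i|
        ≤ (1 / (Nat.factorial i : ℝ)) * (Real.exp (-c) * c^i * ((8*c + 4*c^2 + 2)/s)) := by
          exact mul_le_mul_of_nonneg_left hterm (by positivity)
      _ = Real.exp (-c) * ((8*c + 4*c^2 + 2)/s) * (c^i / (Nat.factorial i : ℝ)) := by ring
  -- sum up
  calc ∑ i ∈ Finset.range (⌊q⌋₊ + 1),
        (1 / (Nat.factorial i : ℝ)) *
          |(1 - x) ^ (d' - i) * (∏ j ∈ Finset.range i, (x * ((d' : ℝ) - (j : ℝ))))
            - Real.exp (-c) * c ^ i|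
      ≤ ∑ i ∈ Finset.range (⌊q⌋₊ + 1),
          Real.exp (-c) * ((8*c + 4*c^2 + 2)/s) * (c^i / (Nat.factorial i : ℝ)) :=
        Finset.sum_le_sum key
    _ = Real.exp (-c) * ((8*c + 4*c^2 + 2)/s) *
          ∑ i ∈ Finset.range (⌊q⌋₊ + 1), (c^i / (Nat.factorial i : ℝ)) := by
        rw [Finset.mul_sum]
    _ ≤ Real.exp (-c) * ((8*c + 4*c^2 + 2)/s) * Real.exp c := by
        refine mul_le_mul_of_nonneg_left (Real.sum_le_exp_of_nonneg hc.le _) (by positivity)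
    _ = (8*c + 4*c^2 + 2) * (1/s) := by
        rw [show Real.exp (-c) * ((8*c + 4*c^2 + 2)/s) * Real.exp c
          = (Real.exp (-c) * Real.exp c) * ((8*c + 4*c^2 + 2)/s) by ring,
          ← Real.exp_add]
        norm_num
        rw [div_eq_mul_inv]
    _ = (8*c + 4*c^2 + 2) * (d:ℝ) ^ (-(1:ℝ)/2) := by
        congr 1
        rw [show (-(1:ℝ))/2 = -((1:ℝ)/2) by norm_num, Real.rpow_neg hd0.le, ← hsdef,
          one_div]
end

section
/- Let m ∈ ℕ, p ∈ [0,1], and let Z = (Z_1, …, Z_m) be a family of i.i.d. Bernoulli(p) random variables. Fix a constant k > 0 and a function f : {0,1}^m → ℝ such that |f(x) - f(y)| ≤ k for every x, y ∈ {0,1}^m which differ in a single coordinate. Then, for every t ≥ 0, P(|f(Z) - E f(Z)| ≥ t) ≤ 2·exp( -t² / (2(1-p)p·k²·m + 2kt/3) ). -/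
open MeasureTheory

open Nat

noncomputable section BDIaux

namespace BDI

lemma exp_tsum (x : ℝ) : Real.exp x = ∑' n : ℕ, x ^ n / (n ! : ℝ) := by
  rw [Real.exp_eq_exp_ℝ, NormedSpace.exp_eq_tsum_div]

lemma summable_shift (x : ℝ) : Summable (fun n : ℕ => x ^ (n + 2) / ((n + 2)! : ℝ)) := by
  have := (summable_nat_add_iff 2).2 (Real.summable_pow_div_factorial x)
  simpa using this

lemma phi_series (x : ℝ) : Real.exp x - 1 - x = ∑' n : ℕ, x ^ (n + 2) / ((n + 2)! : ℝ) := by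
  have hs := Real.summable_pow_div_factorial x
  have hs1 : Summable (fun n : ℕ => x ^ (n + 1) / ((n + 1)! : ℝ)) := by
    have := (summable_nat_add_iff 1).2 hs; simpa using this
  have h := exp_tsum x
  rw [Summable.tsum_eq_zero_add hs] at h
  rw [Summable.tsum_eq_zero_add hs1] at h
  simp only [pow_zero, Nat.factorial_zero, pow_one, Nat.factorial_one] at h
  have : ∑' n : ℕ, x ^ (n + 1 + 1) / ((n + 1 + 1)! : ℝ) = ∑' n : ℕ, x ^ (n + 2) / ((n + 2)! : ℝ) := by
    norm_num
  rw [this] at h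
  norm_num at h
  linarith

lemma phi_nonneg (x : ℝ) : 0 ≤ Real.exp x - 1 - x := by
  nlinarith [Real.add_one_le_exp x]

/-- Lemma A: for `|u| ≤ v`, `φ(u) ≤ (u²/v²) φ(v)`. -/
lemma phi_mono (u v : ℝ) (h : |u| ≤ v) :
    Real.exp u - 1 - u ≤ u ^ 2 / v ^ 2 * (Real.exp v - 1 - v) := by
  have hv : 0 ≤ v := le_trans (abs_nonneg u) h
  rcases eq_or_lt_of_le hv with hv0 | hv0
  · have : u = 0 := by have := abs_nonpos_iff.mp (h.trans hv0.symm.le); exact this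
    simp [this, ← hv0]
  · rw [phi_series u, phi_series v]
    have key : ∀ n : ℕ, u ^ (n + 2) / ((n + 2)! : ℝ) ≤ u ^ 2 / v ^ 2 * (v ^ (n + 2) / ((n + 2)! : ℝ)) := by
      intro n
      have hfac : (0:ℝ) < (n + 2)! := by positivity
      rw [div_le_iff₀ hfac]
      have h1 : u ^ (n + 2) ≤ u ^ 2 * v ^ n := by
        have e1 : u ^ (n + 2) ≤ |u| ^ (n + 2) := by
          rw [← abs_pow]; exact le_abs_self _
        have e2 : |u| ^ (n + 2) = |u| ^ 2 * |u| ^ n := by ring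
        have e3 : |u| ^ n ≤ v ^ n := pow_le_pow_left₀ (abs_nonneg u) h n
        have e4 : |u| ^ 2 * |u| ^ n ≤ |u| ^ 2 * v ^ n :=
          mul_le_mul_of_nonneg_left e3 (by positivity)
        rw [sq_abs] at e2 e4
        linarith
      have e5 : u ^ 2 / v ^ 2 * (v ^ (n + 2) / ((n + 2)! : ℝ)) * ((n + 2)! : ℝ)
          = u ^ 2 * v ^ n := by
        field_simp
        ring
      linarith
    rw [← tsum_mul_left]
    refine Summable.tsum_le_tsum key (summable_shift u) ?_
    exact (summable_shift v).mul_left _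

/-- Lemma B: for `0 ≤ u < 3`, `φ(u) ≤ u²/(2(1-u/3))`. -/
lemma phi_le_bernstein (u : ℝ) (h0 : 0 ≤ u) (h3 : u < 3) :
    Real.exp u - 1 - u ≤ u ^ 2 / (2 * (1 - u / 3)) := by
  have hfact : ∀ n : ℕ, (2 * 3 ^ n : ℝ) ≤ (n + 2)! := by
    intro n
    induction n with
    | zero => norm_num
    | succ n ih =>
      have : ((n + 1 + 2)! : ℝ) = (n + 3) * ((n + 2)! : ℝ) := by
        push_cast [Nat.factorial_succ]; ring_nf
      rw [this]
      have h3n : (3:ℝ) ≤ n + 3 := by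
        have : (0:ℝ) ≤ n := Nat.cast_nonneg n
        linarith
      have hfc : (0:ℝ) ≤ ((n + 2)! : ℝ) := by positivity
      have : (2:ℝ) * 3 ^ (n + 1) = 3 * (2 * 3 ^ n) := by ring
      rw [this]
      calc (3:ℝ) * (2 * 3 ^ n) ≤ 3 * ((n + 2)! : ℝ) := by linarith
      _ ≤ (n + 3) * ((n + 2)! : ℝ) := by nlinarith
  rw [phi_series u]
  have hgeom : ∑' n : ℕ, (u ^ 2 / 2) * (u / 3) ^ n = u ^ 2 / (2 * (1 - u / 3)) := by
    rw [tsum_mul_left, tsum_geometric_of_lt_one (by positivity) (by linarith)]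
    field_simp
  rw [← hgeom]
  have hsum : Summable (fun n : ℕ => (u ^ 2 / 2) * (u / 3) ^ n) :=
    (summable_geometric_of_lt_one (by positivity) (by linarith)).mul_left _
  refine Summable.tsum_le_tsum ?_ (summable_shift u) hsum
  intro n
  have hfac : (0:ℝ) < ((n + 2)! : ℝ) := by positivity
  rw [div_le_iff₀ hfac]
  have hun : 0 ≤ u ^ (n + 2) := by positivity
  have h3n : (0:ℝ) < 3 ^ n := by positivity
  have e : (u ^ 2 / 2) * (u / 3) ^ n * ((n + 2)! : ℝ) * (2 * 3 ^ n)
      = u ^ (n + 2) * ((n + 2)! : ℝ) := by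
    rw [div_pow, pow_add]
    field_simp
  have h2 : u ^ (n + 2) * (2 * 3 ^ n) ≤ u ^ (n + 2) * ((n + 2)! : ℝ) :=
    mul_le_mul_of_nonneg_left (hfact n) hun
  nlinarith [h2, e]


/-! ### Combinatorial framework -/

noncomputable def wB (p : ℝ) (b : Bool) : ℝ := cond b p (1 - p)

lemma wB_nonneg {p : ℝ} (hp0 : 0 ≤ p) (hp1 : p ≤ 1) (b : Bool) : 0 ≤ wB p b := by
  cases b <;> simp [wB] <;> linarith

noncomputable def W (p : ℝ) {n : ℕ} (z : Fin n → Bool) : ℝ := ∏ i, wB p (z i)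

lemma W_nonneg {p : ℝ} (hp0 : 0 ≤ p) (hp1 : p ≤ 1) {n : ℕ} (z : Fin n → Bool) :
    0 ≤ W p z :=
  Finset.prod_nonneg fun i _ => wB_nonneg hp0 hp1 _

lemma W_cons {p : ℝ} {n : ℕ} (b : Bool) (x : Fin n → Bool) :
    W p (Fin.cons b x) = wB p b * W p x := by
  rw [W, Fin.prod_univ_succ]
  simp [W]

noncomputable def Ex (p : ℝ) {n : ℕ} (f : (Fin n → Bool) → ℝ) : ℝ := ∑ z, W p z * f z

lemma sum_split {n : ℕ} (g : (Fin (n + 1) → Bool) → ℝ) :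
    ∑ z, g z = ∑ b : Bool, ∑ x : Fin n → Bool, g (Fin.cons b x) := by
  calc ∑ z, g z = ∑ q : Bool × (Fin n → Bool), g (Fin.cons q.1 q.2) :=
        (Equiv.sum_comp (Fin.consEquiv fun _ => Bool) g).symm
  _ = ∑ b : Bool, ∑ x : Fin n → Bool, g (Fin.cons b x) :=
        Fintype.sum_prod_type (f := fun q : Bool × (Fin n → Bool) => g (Fin.cons q.1 q.2))

lemma sum_W {p : ℝ} (hp0 : 0 ≤ p) (hp1 : p ≤ 1) :
    ∀ n : ℕ, ∑ z : Fin n → Bool, W p z = 1 := by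
  intro n
  induction n with
  | zero => simp [W]
  | succ n ih =>
    rw [sum_split (fun z => W p z)]
    simp only [W_cons, ← Finset.mul_sum, ih, mul_one]
    rw [Fintype.sum_bool]
    simp [wB]

lemma Ex_split {p : ℝ} {n : ℕ} (f : (Fin (n + 1) → Bool) → ℝ) :
    Ex p f = (1 - p) * Ex p (fun x => f (Fin.cons false x))
      + p * Ex p (fun x => f (Fin.cons true x)) := by
  rw [Ex, sum_split (fun z => W p z * f z)]
  rw [Fintype.sum_bool]
  simp only [W_cons, mul_assoc, ← Finset.mul_sum, wB, cond_true, cond_false]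
  rw [Ex, Ex]
  ring

def BD (k : ℝ) {n : ℕ} (f : (Fin n → Bool) → ℝ) : Prop :=
  ∀ x y : Fin n → Bool, (∃! i : Fin n, x i ≠ y i) → |f x - f y| ≤ k

lemma BD_cons {k : ℝ} {n : ℕ} {f : (Fin (n + 1) → Bool) → ℝ} (hf : BD k f) (b : Bool) :
    BD k (fun x => f (Fin.cons b x)) := by
  intro x y h
  obtain ⟨i, hi, hu⟩ := h
  refine hf _ _ ⟨i.succ, by simpa using hi, ?_⟩
  intro j hj
  induction j using Fin.cases with
  | zero => simp at hj
  | succ i' =>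
    simp only [Fin.cons_succ] at hj
    exact congrArg Fin.succ (hu i' hj)

lemma BD_pointwise {k : ℝ} {n : ℕ} {f : (Fin (n + 1) → Bool) → ℝ} (hf : BD k f)
    (x : Fin n → Bool) : |f (Fin.cons false x) - f (Fin.cons true x)| ≤ k := by
  refine hf _ _ ⟨0, by simp, ?_⟩
  intro j hj
  induction j using Fin.cases with
  | zero => rfl
  | succ i' => simp at hj

lemma BD_neg {k : ℝ} {n : ℕ} {f : (Fin n → Bool) → ℝ} (hf : BD k f) :
    BD k (fun z => -f z) := by
  intro x y h
  have h2 := hf x y h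
  rw [abs_sub_comm] at h2
  have e : (-f x) - -f y = f y - f x := by ring
  show |(-f x) - -f y| ≤ k
  rw [e]
  exact h2

lemma Ex_neg {p : ℝ} {n : ℕ} (f : (Fin n → Bool) → ℝ) :
    Ex p (fun z => -f z) = -Ex p f := by
  simp [Ex, mul_neg, Finset.sum_neg_distrib]

lemma abs_Ex_diff_le {p k : ℝ} (hp0 : 0 ≤ p) (hp1 : p ≤ 1) {n : ℕ}
    {f g : (Fin n → Bool) → ℝ} (h : ∀ x, |f x - g x| ≤ k) (hk : 0 ≤ k) :
    |Ex p f - Ex p g| ≤ k := by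
  have e : Ex p f - Ex p g = ∑ x, W p x * (f x - g x) := by
    rw [Ex, Ex, ← Finset.sum_sub_distrib]
    congr 1; ext x; ring
  rw [e]
  calc |∑ x, W p x * (f x - g x)| ≤ ∑ x, |W p x * (f x - g x)| :=
        Finset.abs_sum_le_sum_abs _ _
  _ ≤ ∑ x, W p x * k := by
      refine Finset.sum_le_sum fun x _ => ?_
      rw [abs_mul, abs_of_nonneg (W_nonneg hp0 hp1 x)]
      exact mul_le_mul_of_nonneg_left (h x) (W_nonneg hp0 hp1 x)
  _ = k := by rw [← Finset.sum_mul, sum_W hp0 hp1, one_mul]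


/-! ### Two point MGF bound -/

lemma two_point {p k d l : ℝ} (hp0 : 0 ≤ p) (hp1 : p ≤ 1) (hk : 0 < k)
    (hd : |d| ≤ k) (hl : 0 ≤ l) :
    (1 - p) * Real.exp (l * (-(p * d))) + p * Real.exp (l * ((1 - p) * d))
      ≤ Real.exp (p * (1 - p) * (Real.exp (l * k) - 1 - l * k)) := by
  rcases eq_or_lt_of_le hl with hl0 | hl0
  · simp [← hl0]
  · set Φ := Real.exp (l * k) - 1 - l * k with hΦdef
    have hphi : 0 ≤ Φ := phi_nonneg (l * k)
    have hdk : -k ≤ d ∧ d ≤ k := abs_le.mp hd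
    have habs1 : |l * (-(p * d))| ≤ l * k := by
      rw [abs_mul, abs_of_nonneg hl, abs_neg, abs_mul, abs_of_nonneg hp0]
      refine mul_le_mul_of_nonneg_left ?_ hl
      calc p * |d| ≤ 1 * k := mul_le_mul hp1 hd (abs_nonneg d) zero_le_one
      _ = k := one_mul k
    have habs2 : |l * ((1 - p) * d)| ≤ l * k := by
      rw [abs_mul, abs_of_nonneg hl, abs_mul, abs_of_nonneg (by linarith : (0:ℝ) ≤ 1 - p)]
      refine mul_le_mul_of_nonneg_left ?_ hl
      calc (1 - p) * |d| ≤ 1 * k := mul_le_mul (by linarith) hd (abs_nonneg d) zero_le_one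
      _ = k := one_mul k
    have h1 := phi_mono _ _ habs1
    have h2 := phi_mono _ _ habs2
    -- multiply by the nonnegative weights
    have hq : (0:ℝ) ≤ 1 - p := by linarith
    have h1' : (1 - p) * Real.exp (l * (-(p * d)))
        ≤ (1 - p) * (1 + l * (-(p * d)) + (l * (-(p * d))) ^ 2 / (l * k) ^ 2 * Φ) := by
      refine mul_le_mul_of_nonneg_left ?_ hq
      have := h1
      linarith
    have h2' : p * Real.exp (l * ((1 - p) * d))
        ≤ p * (1 + l * ((1 - p) * d) + (l * ((1 - p) * d)) ^ 2 / (l * k) ^ 2 * Φ) := by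
      refine mul_le_mul_of_nonneg_left ?_ hp0
      have := h2
      linarith
    have hlk : (l * k) ^ 2 ≠ 0 := by positivity
    have key : (1 - p) * (1 + l * (-(p * d)) + (l * (-(p * d))) ^ 2 / (l * k) ^ 2 * Φ)
        + p * (1 + l * ((1 - p) * d) + (l * ((1 - p) * d)) ^ 2 / (l * k) ^ 2 * Φ)
        = 1 + p * (1 - p) * (d ^ 2 / k ^ 2) * Φ := by
      field_simp
      ring
    have hd2 : d ^ 2 / k ^ 2 ≤ 1 := by
      rw [div_le_one (by positivity)]
      calc d ^ 2 = |d| ^ 2 := (sq_abs d).symm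
      _ ≤ k ^ 2 := pow_le_pow_left₀ (abs_nonneg d) hd 2
    have h0 : 0 ≤ p * (1 - p) * Φ := by positivity
    have hmono : p * (1 - p) * (d ^ 2 / k ^ 2) * Φ ≤ p * (1 - p) * Φ := by
      have e : p * (1 - p) * (d ^ 2 / k ^ 2) * Φ = (d ^ 2 / k ^ 2) * (p * (1 - p) * Φ) := by
        ring
      rw [e]
      exact mul_le_of_le_one_left h0 hd2
    have hfin := Real.add_one_le_exp (p * (1 - p) * Φ)
    calc (1 - p) * Real.exp (l * (-(p * d))) + p * Real.exp (l * ((1 - p) * d))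
        ≤ (1 - p) * (1 + l * (-(p * d)) + (l * (-(p * d))) ^ 2 / (l * k) ^ 2 * Φ)
          + p * (1 + l * ((1 - p) * d) + (l * ((1 - p) * d)) ^ 2 / (l * k) ^ 2 * Φ) :=
          add_le_add h1' h2'
    _ = 1 + p * (1 - p) * (d ^ 2 / k ^ 2) * Φ := key
    _ ≤ 1 + p * (1 - p) * Φ := by linarith
    _ ≤ Real.exp (p * (1 - p) * Φ) := by linarith

/-! ### MGF bound by induction -/

lemma mgf_bound {p k : ℝ} (hp0 : 0 ≤ p) (hp1 : p ≤ 1) (hk : 0 < k) :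
    ∀ (n : ℕ) (f : (Fin n → Bool) → ℝ), BD k f → ∀ l : ℝ, 0 ≤ l →
    ∑ z, W p z * Real.exp (l * (f z - Ex p f))
      ≤ Real.exp (n * (p * (1 - p) * (Real.exp (l * k) - 1 - l * k))) := by
  intro n
  induction n with
  | zero =>
    intro f hf l hl
    have hW : ∀ z : Fin 0 → Bool, W p z = 1 := fun z => by simp [W]
    have h1 : ∀ z : Fin 0 → Bool, f z - Ex p f = 0 := by
      intro z
      rw [Ex, Fintype.sum_unique, hW, one_mul]
      exact sub_eq_zero_of_eq (congrArg f (Subsingleton.elim _ _))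
    have hsum : ∑ z : Fin 0 → Bool, W p z * Real.exp (l * (f z - Ex p f)) = 1 := by
      calc ∑ z : Fin 0 → Bool, W p z * Real.exp (l * (f z - Ex p f))
          = ∑ z : Fin 0 → Bool, W p z := by
            refine Finset.sum_congr rfl fun z _ => ?_
            rw [h1 z, mul_zero, Real.exp_zero, mul_one]
      _ = 1 := sum_W hp0 hp1 0
    rw [hsum, Nat.cast_zero, zero_mul, Real.exp_zero]
  | succ n ih =>
    intro f hf l hl
    set c := p * (1 - p) * (Real.exp (l * k) - 1 - l * k) with hc
    set f0 : (Fin n → Bool) → ℝ := fun x => f (Fin.cons false x) with hf0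
    set f1 : (Fin n → Bool) → ℝ := fun x => f (Fin.cons true x) with hf1
    set E := Ex p f with hE
    set E0 := Ex p f0 with hE0
    set E1 := Ex p f1 with hE1
    set d := E1 - E0 with hd
    have hEsplit : E = (1 - p) * E0 + p * E1 := Ex_split f
    have hdk : |d| ≤ k := by
      rw [hd, abs_sub_comm]
      exact abs_Ex_diff_le hp0 hp1 (fun x => BD_pointwise hf x) hk.le
    have inner : ∀ g : (Fin n → Bool) → ℝ, BD k g →
        ∑ x : Fin n → Bool, W p x * Real.exp (l * (g x - E))
          ≤ Real.exp (l * (Ex p g - E)) * Real.exp (n * c) := by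
      intro g hbd
      have hih := ih g hbd l hl
      calc ∑ x : Fin n → Bool, W p x * Real.exp (l * (g x - E))
          = ∑ x : Fin n → Bool, Real.exp (l * (Ex p g - E)) *
              (W p x * Real.exp (l * (g x - Ex p g))) := by
            refine Finset.sum_congr rfl fun x _ => ?_
            have e : l * (g x - E) = l * (Ex p g - E) + l * (g x - Ex p g) := by ring
            rw [e, Real.exp_add]
            ring
      _ = Real.exp (l * (Ex p g - E)) *
            ∑ x : Fin n → Bool, W p x * Real.exp (l * (g x - Ex p g)) := by
            rw [Finset.mul_sum]
      _ ≤ Real.exp (l * (Ex p g - E)) * Real.exp (n * c) :=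
            mul_le_mul_of_nonneg_left hih (Real.exp_nonneg _)
    have hsplit : ∑ z, W p z * Real.exp (l * (f z - E))
        = (1 - p) * ∑ x : Fin n → Bool, W p x * Real.exp (l * (f0 x - E))
          + p * ∑ x : Fin n → Bool, W p x * Real.exp (l * (f1 x - E)) := by
      rw [sum_split (fun z => W p z * Real.exp (l * (f z - E))), Fintype.sum_bool]
      simp only [W_cons, wB, cond_true, cond_false, mul_assoc, ← Finset.mul_sum, hf0, hf1]
      ring
    have hq : (0:ℝ) ≤ 1 - p := by linarith
    have i0 := inner f0 (BD_cons hf false)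
    have i1 := inner f1 (BD_cons hf true)
    have step1 : ∑ z, W p z * Real.exp (l * (f z - E))
        ≤ ((1 - p) * Real.exp (l * (E0 - E)) + p * Real.exp (l * (E1 - E)))
            * Real.exp (n * c) := by
      rw [hsplit]
      calc (1 - p) * ∑ x : Fin n → Bool, W p x * Real.exp (l * (f0 x - E))
            + p * ∑ x : Fin n → Bool, W p x * Real.exp (l * (f1 x - E))
          ≤ (1 - p) * (Real.exp (l * (E0 - E)) * Real.exp (n * c))
            + p * (Real.exp (l * (E1 - E)) * Real.exp (n * c)) :=
            add_le_add (mul_le_mul_of_nonneg_left i0 hq) (mul_le_mul_of_nonneg_left i1 hp0)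
      _ = ((1 - p) * Real.exp (l * (E0 - E)) + p * Real.exp (l * (E1 - E)))
            * Real.exp (n * c) := by ring
    have harg0 : E0 - E = -(p * d) := by rw [hEsplit, hd]; ring
    have harg1 : E1 - E = (1 - p) * d := by rw [hEsplit, hd]; ring
    have step2 : (1 - p) * Real.exp (l * (E0 - E)) + p * Real.exp (l * (E1 - E))
        ≤ Real.exp c := by
      rw [harg0, harg1, hc]
      exact two_point hp0 hp1 hk hdk hl
    calc ∑ z, W p z * Real.exp (l * (f z - E))
        ≤ ((1 - p) * Real.exp (l * (E0 - E)) + p * Real.exp (l * (E1 - E)))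
            * Real.exp (n * c) := step1
    _ ≤ Real.exp c * Real.exp (n * c) :=
        mul_le_mul_of_nonneg_right step2 (Real.exp_nonneg _)
    _ = Real.exp (((n + 1 : ℕ) : ℝ) * c) := by
        rw [← Real.exp_add]
        congr 1
        push_cast
        ring

/-! ### Chernoff bounds -/

lemma chernoff_one {p k : ℝ} (hp0 : 0 ≤ p) (hp1 : p ≤ 1) (hk : 0 < k) {n : ℕ}
    {f : (Fin n → Bool) → ℝ} (hf : BD k f) {t : ℝ} (ht : 0 < t) :
    ∑ z ∈ Finset.univ.filter (fun z : Fin n → Bool => t ≤ f z - Ex p f), W p z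
      ≤ Real.exp (-(t ^ 2) / (2 * (1 - p) * p * k ^ 2 * n + 2 * k * t / 3)) := by
  have hq : (0:ℝ) ≤ 1 - p := by linarith
  have base : ∀ l : ℝ, 0 ≤ l →
      ∑ z ∈ Finset.univ.filter (fun z : Fin n → Bool => t ≤ f z - Ex p f), W p z
        ≤ Real.exp (-(l * t) + n * (p * (1 - p) * (Real.exp (l * k) - 1 - l * k))) := by
    intro l hl
    have hmgf := mgf_bound hp0 hp1 hk n f hf l hl
    have step : ∑ z ∈ Finset.univ.filter (fun z : Fin n → Bool => t ≤ f z - Ex p f), W p z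
        ≤ Real.exp (-(l * t)) * ∑ z, W p z * Real.exp (l * (f z - Ex p f)) := by
      rw [Finset.mul_sum]
      calc ∑ z ∈ Finset.univ.filter (fun z : Fin n → Bool => t ≤ f z - Ex p f), W p z
          ≤ ∑ z ∈ Finset.univ.filter (fun z : Fin n → Bool => t ≤ f z - Ex p f),
              Real.exp (-(l * t)) * (W p z * Real.exp (l * (f z - Ex p f))) := by
            refine Finset.sum_le_sum fun z hz => ?_
            rw [Finset.mem_filter] at hz
            have hz' := hz.2
            have e : Real.exp (-(l * t)) * (W p z * Real.exp (l * (f z - Ex p f)))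
                = W p z * Real.exp (l * (f z - Ex p f) - l * t) := by
              rw [Real.exp_sub, Real.exp_neg]
              ring
            rw [e]
            have harg : 0 ≤ l * (f z - Ex p f) - l * t := by nlinarith
            have := Real.one_le_exp harg
            nlinarith [W_nonneg hp0 hp1 z]
      _ ≤ ∑ z, Real.exp (-(l * t)) * (W p z * Real.exp (l * (f z - Ex p f))) := by
            refine Finset.sum_le_sum_of_subset_of_nonneg (Finset.filter_subset _ _)
              fun z _ _ => ?_
            have := W_nonneg hp0 hp1 z
            positivity
    calc ∑ z ∈ Finset.univ.filter (fun z : Fin n → Bool => t ≤ f z - Ex p f), W p z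
        ≤ Real.exp (-(l * t)) * ∑ z, W p z * Real.exp (l * (f z - Ex p f)) := step
    _ ≤ Real.exp (-(l * t)) *
          Real.exp (n * (p * (1 - p) * (Real.exp (l * k) - 1 - l * k))) :=
        mul_le_mul_of_nonneg_left hmgf (Real.exp_nonneg _)
    _ = Real.exp (-(l * t) + n * (p * (1 - p) * (Real.exp (l * k) - 1 - l * k))) :=
        (Real.exp_add _ _).symm
  set v : ℝ := p * (1 - p) * k ^ 2 * n with hv
  have hv0 : 0 ≤ v := by positivity
  have hden : 2 * (1 - p) * p * k ^ 2 * n + 2 * k * t / 3 = 2 * (v + k * t / 3) := by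
    rw [hv]; ring
  rcases eq_or_lt_of_le hv0 with hveq | hvpos
  · -- degenerate case : v = 0
    have hz : p * (1 - p) * (n:ℝ) = 0 := by
      have hk2 : (k:ℝ) ^ 2 ≠ 0 := by positivity
      have h1 : (p * (1 - p) * (n:ℝ)) * k ^ 2 = 0 * k ^ 2 := by
        rw [zero_mul]; linear_combination -hveq
      exact mul_right_cancel₀ hk2 h1
    have hl : (0:ℝ) ≤ 3 / (2 * k) := by positivity
    have hb := base (3 / (2 * k)) hl
    have hexp0 : (n:ℝ) * (p * (1 - p) *
        (Real.exp (3 / (2 * k) * k) - 1 - 3 / (2 * k) * k)) = 0 := by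
      linear_combination (Real.exp (3 / (2 * k) * k) - 1 - 3 / (2 * k) * k) * hz
    have hdz : 2 * (1 - p) * p * k ^ 2 * n + 2 * k * t / 3 = 2 * k * t / 3 := by
      linear_combination (2 * k ^ 2) * hz
    have harg : -(3 / (2 * k) * t) + (n:ℝ) * (p * (1 - p) *
          (Real.exp (3 / (2 * k) * k) - 1 - 3 / (2 * k) * k))
        = -(t ^ 2) / (2 * (1 - p) * p * k ^ 2 * n + 2 * k * t / 3) := by
      rw [hexp0, hdz, add_zero]
      field_simp
    rw [← harg]
    exact hb
  · -- main case : v > 0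
    set D : ℝ := v + k * t / 3 with hD
    have hDpos : 0 < D := by positivity
    set l : ℝ := t / D with hl
    have hl0 : 0 ≤ l := by positivity
    have hlk0 : 0 ≤ l * k := by positivity
    have hlk3 : l * k < 3 := by
      rw [hl, div_mul_eq_mul_div, div_lt_iff₀ hDpos]
      rw [hD]
      nlinarith
    have hb := base l hl0
    have hphi := phi_le_bernstein (l * k) hlk0 hlk3
    have h13 : 1 - l * k / 3 = v / D := by
      rw [hl, hD]
      field_simp
      ring
    have hmid : (n:ℝ) * (p * (1 - p) * (Real.exp (l * k) - 1 - l * k))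
        ≤ t ^ 2 / (2 * D) := by
      have e2 : (n:ℝ) * (p * (1 - p) * ((l * k) ^ 2 / (2 * (1 - l * k / 3))))
          = t ^ 2 / (2 * D) := by
        rw [h13, hl]
        have hvne := hvpos.ne'
        field_simp
        rw [hv]
        ring
      calc (n:ℝ) * (p * (1 - p) * (Real.exp (l * k) - 1 - l * k))
          ≤ (n:ℝ) * (p * (1 - p) * ((l * k) ^ 2 / (2 * (1 - l * k / 3)))) := by
            have hpp : (0:ℝ) ≤ p * (1 - p) := by positivity
            have hn : (0:ℝ) ≤ (n:ℝ) := Nat.cast_nonneg n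
            exact mul_le_mul_of_nonneg_left
              (mul_le_mul_of_nonneg_left hphi hpp) hn
      _ = t ^ 2 / (2 * D) := e2
    have hfin : -(l * t) + t ^ 2 / (2 * D)
        = -(t ^ 2) / (2 * (1 - p) * p * k ^ 2 * n + 2 * k * t / 3) := by
      rw [hden, hl]
      field_simp
      ring
    calc ∑ z ∈ Finset.univ.filter (fun z : Fin n → Bool => t ≤ f z - Ex p f), W p z
        ≤ Real.exp (-(l * t) + n * (p * (1 - p) * (Real.exp (l * k) - 1 - l * k))) := hb
    _ ≤ Real.exp (-(l * t) + t ^ 2 / (2 * D)) := by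
        apply Real.exp_le_exp.mpr
        linarith
    _ = Real.exp (-(t ^ 2) / (2 * (1 - p) * p * k ^ 2 * n + 2 * k * t / 3)) := by
        rw [hfin]

lemma chernoff_two {p k : ℝ} (hp0 : 0 ≤ p) (hp1 : p ≤ 1) (hk : 0 < k) {n : ℕ}
    {f : (Fin n → Bool) → ℝ} (hf : BD k f) {t : ℝ} (ht : 0 < t) :
    ∑ z ∈ Finset.univ.filter (fun z : Fin n → Bool => t ≤ |f z - Ex p f|), W p z
      ≤ 2 * Real.exp (-(t ^ 2) / (2 * (1 - p) * p * k ^ 2 * n + 2 * k * t / 3)) := by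
  set g : (Fin n → Bool) → ℝ := fun z => -f z with hg
  have hEg : Ex p g = -Ex p f := Ex_neg f
  set A := Finset.univ.filter (fun z : Fin n → Bool => t ≤ f z - Ex p f) with hA
  set B := Finset.univ.filter (fun z : Fin n → Bool => t ≤ g z - Ex p g) with hB
  have hsub : Finset.univ.filter (fun z : Fin n → Bool => t ≤ |f z - Ex p f|) ⊆ A ∪ B := by
    intro z hz
    rw [Finset.mem_filter] at hz
    rcases le_abs.mp hz.2 with h | h
    · exact Finset.mem_union_left _ (Finset.mem_filter.mpr ⟨Finset.mem_univ z, h⟩)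
    · refine Finset.mem_union_right _ (Finset.mem_filter.mpr ⟨Finset.mem_univ z, ?_⟩)
      simp only [hg, hEg]
      linarith
  have hdisj : Disjoint A B := by
    rw [Finset.disjoint_left]
    intro z hzA hzB
    rw [hA, Finset.mem_filter] at hzA
    rw [hB, Finset.mem_filter] at hzB
    have h1 := hzA.2
    have h2 := hzB.2
    simp only [hg, hEg] at h2
    linarith
  have hCA := chernoff_one hp0 hp1 hk hf ht
  have hCB := chernoff_one hp0 hp1 hk (BD_neg hf) ht
  calc ∑ z ∈ Finset.univ.filter (fun z : Fin n → Bool => t ≤ |f z - Ex p f|), W p z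
      ≤ ∑ z ∈ A ∪ B, W p z :=
        Finset.sum_le_sum_of_subset_of_nonneg hsub fun z _ _ => W_nonneg hp0 hp1 z
  _ = (∑ z ∈ A, W p z) + ∑ z ∈ B, W p z := Finset.sum_union hdisj
  _ ≤ Real.exp (-(t ^ 2) / (2 * (1 - p) * p * k ^ 2 * n + 2 * k * t / 3))
      + Real.exp (-(t ^ 2) / (2 * (1 - p) * p * k ^ 2 * n + 2 * k * t / 3)) :=
        add_le_add hCA hCB
  _ = 2 * Real.exp (-(t ^ 2) / (2 * (1 - p) * p * k ^ 2 * n + 2 * k * t / 3)) := by ring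

/-! ### Measure of a finset -/

lemma meas_finset {Ω : Type*} [MeasurableSpace Ω] [MeasurableSingletonClass Ω]
    (μ : MeasureTheory.Measure Ω) (A : Finset Ω) :
    μ ↑A = ∑ z ∈ A, μ {z} := by
  have h1 : (↑A : Set Ω) = ⋃ z ∈ A, {z} := by ext x; simp
  rw [h1, MeasureTheory.measure_biUnion_finset ?_ fun b _ => measurableSet_singleton b]
  intro x _ y _ hxy
  exact Set.disjoint_singleton.mpr hxy

end BDI


/-- Theorem 3.4, a variant of the Azuma–Hoeffding inequality.
Let `Z = (Z_1, …, Z_m)` be i.i.d. Bernoulli(`p`) random variables and let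
`f : {0,1}^m → ℝ` satisfy `|f(x) - f(y)| ≤ k` whenever `x` and `y` differ in a single
coordinate. Then for every `t ≥ 0`,
`P(|f(Z) - E f(Z)| ≥ t) ≤ 2·exp(-t² / (2(1-p)p·k²·m + 2kt/3))`. -/
theorem bounded_differences_inequality (m : ℕ) (p : ℝ) (hp0 : 0 ≤ p) (hp1 : p ≤ 1)
    (k : ℝ) (hk : 0 < k) (f : (Fin m → Bool) → ℝ)
    (hf : ∀ x y : Fin m → Bool, (∃! i : Fin m, x i ≠ y i) → |f x - f y| ≤ k)
    (t : ℝ) (ht : 0 ≤ t) :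
    (Measure.pi fun _ : Fin m =>
        (PMF.bernoulli (Real.toNNReal p) (Real.toNNReal_le_one.mpr hp1)).toMeasure)
      {z | t ≤ |f z - ∫ z', f z' ∂(Measure.pi fun _ : Fin m =>
        (PMF.bernoulli (Real.toNNReal p) (Real.toNNReal_le_one.mpr hp1)).toMeasure)|}
      ≤ ENNReal.ofReal
          (2 * Real.exp (-(t ^ 2) / (2 * (1 - p) * p * k ^ 2 * (m : ℝ) + 2 * k * t / 3))) := by
  classical
  have hkBD : BDI.BD k f := hf
  set ν : Measure Bool :=
    (PMF.bernoulli (Real.toNNReal p) (Real.toNNReal_le_one.mpr hp1)).toMeasure with hν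
  have hν_single : ∀ b : Bool, ν {b} = ENNReal.ofReal (BDI.wB p b) := by
    intro b
    rw [hν, PMF.toMeasure_apply_singleton _ _ (measurableSet_singleton _), PMF.bernoulli_apply]
    cases b
    · show 1 - ENNReal.ofReal p = ENNReal.ofReal (BDI.wB p false)
      rw [show BDI.wB p false = 1 - p from rfl, ENNReal.ofReal_sub 1 hp0, ENNReal.ofReal_one]
    · rfl
  have hpin : ∀ z : Fin m → Bool,
      (Measure.pi fun _ : Fin m => ν) {z} = ENNReal.ofReal (BDI.W p z) := by
    intro z
    rw [← Set.univ_pi_singleton z, Measure.pi_pi]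
    simp only [hν_single]
    rw [← ENNReal.ofReal_prod_of_nonneg fun i _ => BDI.wB_nonneg hp0 hp1 (z i)]
    rfl
  have hInt : ∫ z', f z' ∂(Measure.pi fun _ : Fin m => ν) = BDI.Ex p f := by
    rw [MeasureTheory.integral_fintype Integrable.of_finite, BDI.Ex]
    refine Finset.sum_congr rfl fun z _ => ?_
    rw [measureReal_def, hpin z, ENNReal.toReal_ofReal (BDI.W_nonneg hp0 hp1 z), smul_eq_mul]
  rw [hInt]
  rcases eq_or_lt_of_le ht with ht0 | htpos
  · -- t = 0 : trivial bound by total mass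
    have h2 : (1 : ENNReal) ≤ ENNReal.ofReal
        (2 * Real.exp (-(t ^ 2) / (2 * (1 - p) * p * k ^ 2 * (m : ℝ) + 2 * k * t / 3))) := by
      rw [← ht0]
      norm_num
    exact le_trans prob_le_one h2
  · -- t > 0 : Chernoff bound
    have hsum := BDI.chernoff_two hp0 hp1 hk hkBD htpos (n := m)
    have hSet : {z : Fin m → Bool | t ≤ |f z - BDI.Ex p f|}
        = ↑(Finset.univ.filter fun z : Fin m → Bool => t ≤ |f z - BDI.Ex p f|) := by
      ext z; simp
    rw [hSet, BDI.meas_finset]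
    calc ∑ z ∈ Finset.univ.filter (fun z : Fin m → Bool => t ≤ |f z - BDI.Ex p f|),
          (Measure.pi fun _ : Fin m => ν) {z}
        = ∑ z ∈ Finset.univ.filter (fun z : Fin m → Bool => t ≤ |f z - BDI.Ex p f|),
            ENNReal.ofReal (BDI.W p z) :=
          Finset.sum_congr rfl fun z _ => hpin z
    _ = ENNReal.ofReal (∑ z ∈ Finset.univ.filter
          (fun z : Fin m → Bool => t ≤ |f z - BDI.Ex p f|), BDI.W p z) :=
          (ENNReal.ofReal_sum_of_nonneg fun z _ => BDI.W_nonneg hp0 hp1 z).symm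
    _ ≤ ENNReal.ofReal
          (2 * Real.exp (-(t ^ 2) / (2 * (1 - p) * p * k ^ 2 * (m : ℝ) + 2 * k * t / 3))) :=
          ENNReal.ofReal_le_ofReal hsum
end BDIaux
end

section
/- For all integers r ≥ 1 and γ ≥ 2, the number of isomorphism classes of finite rooted trees with height at most r and maximum degree at most γ is at most γ^{2·γ^{r-1}}. -/
/-- A finite rooted graph: a simple graph on the vertex set `Fin n` (every finite graph is
isomorphic to one of this form) together with a distinguished root vertex. -/
structure RootedGraph where
  /-- the number of vertices -/
  n : ℕ
  /-- the underlying graph -/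
  graph : SimpleGraph (Fin n)
  /-- the root -/
  root : Fin n

/-- The predicate that a rooted graph is a tree of height at most `r` (every vertex is at
distance at most `r` from the root) and maximum degree at most `γ`. -/
def IsShortBoundedTree (r γ : ℕ) (x : RootedGraph) : Prop :=
  x.graph.IsTree ∧ (∀ v, x.graph.dist x.root v ≤ r) ∧
    (∀ v, {u | x.graph.Adj v u}.ncard ≤ γ)

/-- Two rooted graphs are isomorphic if there is a graph isomorphism between the underlying
graphs mapping root to root. -/
def RootedIso (x y : RootedGraph) : Prop :=
  ∃ φ : x.graph ≃g y.graph, φ x.root = y.root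

noncomputable section
namespace RTAux
open SimpleGraph Set
open scoped Classical

/-- iterated multiset type -/
def M : ℕ → Type
  | 0 => PUnit
  | k+1 => Multiset (M k)

variable (x : RootedGraph)

/-- depth of a vertex -/
def dep (v : Fin x.n) : ℕ := x.graph.dist x.root v

/-- children of a vertex -/
def chF (v : Fin x.n) : Finset (Fin x.n) :=
  Finset.univ.filter fun u => x.graph.Adj v u ∧ dep x u = dep x v + 1

/-- parent of a vertex -/
def par (v : Fin x.n) : Fin x.n :=
  if h : ∃ u, x.graph.Adj v u ∧ dep x u + 1 = dep x v then h.choose else v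

/-- iterated-multiset code of a vertex -/
def cd : (k : ℕ) → Fin x.n → M k
  | 0 => fun _ => PUnit.unit
  | k+1 => fun v => ((chF x v).val.map (cd k) : Multiset (M k))

/-- descendants of a vertex -/
def Des (v : Fin x.n) : Set (Fin x.n) :=
  {u | dep x v ≤ dep x u ∧ (par x)^[dep x u - dep x v] u = v}

variable {x}

lemma dep_root : dep x x.root = 0 := SimpleGraph.dist_self

lemma root_of_dep_eq_zero (hc : x.graph.Connected) {v : Fin x.n} (h : dep x v = 0) :
    v = x.root := (hc.dist_eq_zero_iff.mp h).symm

lemma ne_root_of_dep_pos {v : Fin x.n} (h : 0 < dep x v) : v ≠ x.root := by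
  rintro rfl; simp [dep_root] at h

lemma dep_pos_of_ne_root (hc : x.graph.Connected) {v : Fin x.n} (h : v ≠ x.root) :
    0 < dep x v :=
  Nat.pos_of_ne_zero fun h0 => h (root_of_dep_eq_zero hc h0)

/-- a path from the root realizing the distance -/
lemma exists_spath (hc : x.graph.Connected) (v : Fin x.n) :
    ∃ p : x.graph.Walk x.root v, p.IsPath ∧ p.length = dep x v := by
  obtain ⟨W, hW⟩ := hc.exists_walk_length_eq_dist x.root v
  exact ⟨W.bypass, W.bypass_isPath,
    le_antisymm (le_trans W.length_bypass_le hW.le) (SimpleGraph.dist_le _)⟩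

lemma dep_le_of_mem_support {u v : Fin x.n} {P : x.graph.Walk x.root u}
    (hv : v ∈ P.support) : dep x v ≤ P.length := by
  have h1 : dep x v ≤ (P.takeUntil v hv).length := SimpleGraph.dist_le _
  exact le_trans h1 (SimpleGraph.Walk.length_takeUntil_le P hv)

/-- no adjacent vertices at equal depth -/
lemma adj_dep_ne (ht : x.graph.IsTree) {u v : Fin x.n} (h : x.graph.Adj u v) :
    dep x u ≠ dep x v := by
  intro heq
  obtain ⟨P, hP, hPl⟩ := exists_spath ht.isConnected u
  have hvP : v ∉ P.support := by
    intro hv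
    have h1 : dep x v ≤ (P.takeUntil v hv).length := SimpleGraph.dist_le _
    have h2 : (P.takeUntil v hv).length + (P.dropUntil v hv).length = P.length := by
      rw [← SimpleGraph.Walk.length_append, SimpleGraph.Walk.take_spec]
    have h3 : (P.dropUntil v hv).length ≠ 0 := by
      intro h0
      exact h.ne' (SimpleGraph.Walk.eq_of_length_eq_zero h0)
    omega
  have hQ : (P.concat h).IsPath := by
    rw [SimpleGraph.Walk.isPath_def, SimpleGraph.Walk.support_concat,
      List.nodup_append']
    refine ⟨hP.support_nodup, List.nodup_singleton v, ?_⟩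
    intro a ha hav
    simp only [List.mem_singleton] at hav
    subst hav; exact hvP ha
  obtain ⟨R, hR, hRl⟩ := exists_spath ht.isConnected v
  have := ht.IsAcyclic.path_unique ⟨P.concat h, hQ⟩ ⟨R, hR⟩
  have hlen : (P.concat h).length = R.length := by
    rw [Subtype.ext_iff] at this
    exact congrArg SimpleGraph.Walk.length this
  rw [SimpleGraph.Walk.length_concat] at hlen
  omega

/-- uniqueness of the parent -/
lemma parent_unique (ht : x.graph.IsTree) {v u1 u2 : Fin x.n}
    (h1 : x.graph.Adj v u1) (h2 : x.graph.Adj v u2)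
    (d1 : dep x u1 + 1 = dep x v) (d2 : dep x u2 + 1 = dep x v) : u1 = u2 := by
  obtain ⟨P1, hP1, hP1l⟩ := exists_spath ht.isConnected u1
  obtain ⟨P2, hP2, hP2l⟩ := exists_spath ht.isConnected u2
  have hv1 : v ∉ P1.support := fun hv => by
    have := dep_le_of_mem_support hv; omega
  have hv2 : v ∉ P2.support := fun hv => by
    have := dep_le_of_mem_support hv; omega
  have hQ1 : (P1.concat h1.symm).IsPath := by
    rw [SimpleGraph.Walk.isPath_def, SimpleGraph.Walk.support_concat,
      List.nodup_append']
    refine ⟨hP1.support_nodup, List.nodup_singleton v, ?_⟩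
    intro a ha hav
    simp only [List.mem_singleton] at hav
    subst hav; exact hv1 ha
  have hQ2 : (P2.concat h2.symm).IsPath := by
    rw [SimpleGraph.Walk.isPath_def, SimpleGraph.Walk.support_concat,
      List.nodup_append']
    refine ⟨hP2.support_nodup, List.nodup_singleton v, ?_⟩
    intro a ha hav
    simp only [List.mem_singleton] at hav
    subst hav; exact hv2 ha
  have := ht.IsAcyclic.path_unique ⟨P1.concat h1.symm, hQ1⟩ ⟨P2.concat h2.symm, hQ2⟩
  rw [Subtype.ext_iff] at this
  obtain ⟨hv, -⟩ := SimpleGraph.Walk.concat_inj this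
  exact hv

/-- existence of the parent -/
lemma exists_parent (ht : x.graph.IsTree) {v : Fin x.n} (hv : v ≠ x.root) :
    ∃ u, x.graph.Adj v u ∧ dep x u + 1 = dep x v := by
  have hpos : 0 < dep x v := dep_pos_of_ne_root ht.isConnected hv
  obtain ⟨W, hW⟩ := ht.isConnected.exists_walk_length_eq_dist x.root v
  have hlen : W.reverse.length = dep x v := by
    rw [SimpleGraph.Walk.length_reverse]; exact hW
  have hnil : ¬ W.reverse.Nil := by
    rw [SimpleGraph.Walk.not_nil_iff_lt_length]; omega
  refine ⟨W.reverse.getVert 1, W.reverse.adj_snd hnil, ?_⟩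
  have h1 : dep x (W.reverse.getVert 1) ≤ W.reverse.tail.length := by
    rw [dep, SimpleGraph.dist_comm]
    exact SimpleGraph.dist_le W.reverse.tail
  have h2 : W.reverse.tail.length + 1 = W.reverse.length :=
    SimpleGraph.Walk.length_tail_add_one hnil
  have h3 : dep x v ≤ dep x (W.reverse.getVert 1) + 1 := by
    have ha : x.graph.dist (W.reverse.getVert 1) v = 1 :=
      SimpleGraph.dist_eq_one_iff_adj.mpr (W.reverse.adj_snd hnil).symm
    calc dep x v ≤ x.graph.dist x.root (W.reverse.getVert 1)
        + x.graph.dist (W.reverse.getVert 1) v := ht.isConnected.dist_triangle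
      _ = dep x (W.reverse.getVert 1) + 1 := by rw [ha]; rfl
  omega
end RTAux

namespace RTAux
open SimpleGraph Set
open scoped Classical
variable {x : RootedGraph}

lemma par_spec (ht : x.graph.IsTree) {v : Fin x.n} (hv : v ≠ x.root) :
    x.graph.Adj v (par x v) ∧ dep x (par x v) + 1 = dep x v := by
  have h := exists_parent ht hv
  rw [par, dif_pos h]
  exact h.choose_spec

lemma par_root : par x x.root = x.root := by
  rw [par, dif_neg]
  rintro ⟨u, -, hd⟩
  rw [dep_root] at hd
  omega

lemma par_eq_of (ht : x.graph.IsTree) {v u : Fin x.n} (h : x.graph.Adj v u)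
    (hd : dep x u + 1 = dep x v) : par x v = u := by
  have hv : v ≠ x.root := ne_root_of_dep_pos (by omega)
  obtain ⟨h1, h2⟩ := par_spec ht hv
  exact parent_unique ht h1 h h2 hd

/-- adjacent vertices differ in depth by exactly one -/
lemma adj_dep_cases (ht : x.graph.IsTree) {u v : Fin x.n} (h : x.graph.Adj u v) :
    dep x v + 1 = dep x u ∨ dep x u + 1 = dep x v := by
  have h1 : dep x u ≤ dep x v + 1 := by
    have : x.graph.dist x.root u ≤ x.graph.dist x.root v + x.graph.dist v u :=
      ht.isConnected.dist_triangle
    rw [SimpleGraph.dist_eq_one_iff_adj.mpr h.symm] at this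
    exact this
  have h2 : dep x v ≤ dep x u + 1 := by
    have : x.graph.dist x.root v ≤ x.graph.dist x.root u + x.graph.dist u v :=
      ht.isConnected.dist_triangle
    rw [SimpleGraph.dist_eq_one_iff_adj.mpr h] at this
    exact this
  have h3 := adj_dep_ne ht h
  omega

lemma mem_chF_iff (ht : x.graph.IsTree) {v u : Fin x.n} :
    u ∈ chF x v ↔ u ≠ x.root ∧ par x u = v := by
  rw [chF, Finset.mem_filter]
  constructor
  · rintro ⟨-, hadj, hd⟩
    exact ⟨ne_root_of_dep_pos (by omega), par_eq_of ht hadj.symm (by omega)⟩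
  · rintro ⟨hu, hp⟩
    obtain ⟨h1, h2⟩ := par_spec ht hu
    rw [hp] at h1 h2
    exact ⟨Finset.mem_univ u, h1.symm, by omega⟩

lemma dep_of_mem_chF {v u : Fin x.n} (h : u ∈ chF x v) : dep x u = dep x v + 1 :=
  (Finset.mem_filter.mp h).2.2

lemma adj_of_mem_chF {v u : Fin x.n} (h : u ∈ chF x v) : x.graph.Adj v u :=
  (Finset.mem_filter.mp h).2.1

/-- iterating the parent map decreases depth -/
lemma dep_par_iterate (ht : x.graph.IsTree) :
    ∀ (m : ℕ) (u : Fin x.n), m ≤ dep x u → dep x ((par x)^[m] u) = dep x u - m := by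
  intro m
  induction m with
  | zero => intro u _; simp
  | succ m ih =>
    intro u hm
    have h1 : dep x ((par x)^[m] u) = dep x u - m := ih u (by omega)
    have h2 : (par x)^[m] u ≠ x.root := ne_root_of_dep_pos (by omega)
    obtain ⟨-, h3⟩ := par_spec ht h2
    rw [Function.iterate_succ_apply']
    omega

lemma par_iterate_root (ht : x.graph.IsTree) (u : Fin x.n) :
    (par x)^[dep x u] u = x.root := by
  have := dep_par_iterate ht (dep x u) u le_rfl
  exact root_of_dep_eq_zero ht.isConnected (by omega)

lemma mem_Des_self (v : Fin x.n) : v ∈ Des x v := by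
  refine ⟨le_rfl, ?_⟩
  simp

lemma dep_le_of_mem_Des {v u : Fin x.n} (h : u ∈ Des x v) : dep x v ≤ dep x u := h.1

lemma eq_of_mem_Des_dep_le {v u : Fin x.n} (h : u ∈ Des x v) (hd : dep x u ≤ dep x v) :
    u = v := by
  have h2 := h.2
  have h1 := h.1
  have : dep x u - dep x v = 0 := by omega
  rwa [this, Function.iterate_zero_apply] at h2

lemma dep_lt_of_mem_Des_ne {v u : Fin x.n} (h : u ∈ Des x v) (hne : u ≠ v) :
    dep x v < dep x u := by
  rcases Nat.lt_or_ge (dep x v) (dep x u) with h' | h'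
  · exact h'
  · exact absurd (eq_of_mem_Des_dep_le h h') hne

lemma Des_root (ht : x.graph.IsTree) : Des x x.root = Set.univ := by
  ext u
  simp only [Set.mem_univ, iff_true]
  exact ⟨by rw [dep_root]; omega, by rw [dep_root, Nat.sub_zero]; exact par_iterate_root ht u⟩

lemma Des_child_subset (ht : x.graph.IsTree) {v c : Fin x.n} (hc : c ∈ chF x v) :
    Des x c ⊆ Des x v := by
  intro u hu
  have hdc : dep x c = dep x v + 1 := dep_of_mem_chF hc
  have h1 := hu.1
  have h2 := hu.2
  refine ⟨by omega, ?_⟩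
  have hm : dep x u - dep x v = (dep x u - dep x c) + 1 := by omega
  rw [hm, Function.iterate_succ_apply', h2]
  exact ((mem_chF_iff ht).mp hc).2

lemma exists_child (ht : x.graph.IsTree) {v u : Fin x.n} (hu : u ∈ Des x v) (hne : u ≠ v) :
    (par x)^[dep x u - dep x v - 1] u ∈ chF x v ∧
      u ∈ Des x ((par x)^[dep x u - dep x v - 1] u) := by
  have hlt : dep x v < dep x u := dep_lt_of_mem_Des_ne hu hne
  set m := dep x u - dep x v with hm
  set c := (par x)^[m - 1] u with hc
  have hdc : dep x c = dep x v + 1 := by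
    rw [hc, dep_par_iterate ht (m-1) u (by omega)]; omega
  have hpc : par x c = v := by
    have h2 : (par x)^[m] u = v := hu.2
    have hmm : m = (m - 1) + 1 := by omega
    rw [hmm, Function.iterate_succ_apply'] at h2
    exact h2
  constructor
  · exact (mem_chF_iff ht).mpr ⟨ne_root_of_dep_pos (by omega), hpc⟩
  · refine ⟨by omega, ?_⟩
    have h3 : dep x u - dep x c = m - 1 := by omega
    rw [h3]

lemma child_eq_of_mem_Des {v c u : Fin x.n} (hc : c ∈ chF x v)
    (hu : u ∈ Des x c) : (par x)^[dep x u - dep x v - 1] u = c := by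
  have hdc : dep x c = dep x v + 1 := dep_of_mem_chF hc
  have : dep x u - dep x v - 1 = dep x u - dep x c := by omega
  rw [this]
  exact hu.2

lemma par_mem_Des (ht : x.graph.IsTree) {c u : Fin x.n} (hu : u ∈ Des x c) (hne : u ≠ c) :
    par x u ∈ Des x c := by
  have hlt : dep x c < dep x u := dep_lt_of_mem_Des_ne hu hne
  have hdp : dep x (par x u) + 1 = dep x u :=
    (par_spec ht (ne_root_of_dep_pos (by omega))).2
  refine ⟨by omega, ?_⟩
  have h2 := hu.2
  have hm : dep x u - dep x c = (dep x (par x u) - dep x c) + 1 := by omega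
  rw [hm, Function.iterate_succ_apply] at h2
  exact h2

end RTAux

namespace RTAux
open SimpleGraph Set
open scoped Classical
variable {x y : RootedGraph}

/-- vertices in subtrees of distinct children are not adjacent -/
lemma not_adj_of_distinct_subtrees (ht : x.graph.IsTree) {v c1 c2 u1 u2 : Fin x.n}
    (hc1 : c1 ∈ chF x v) (hc2 : c2 ∈ chF x v) (hne : c1 ≠ c2)
    (h1 : u1 ∈ Des x c1) (h2 : u2 ∈ Des x c2) : ¬ x.graph.Adj u1 u2 := by
  intro hadj
  have hd1 : dep x c1 = dep x v + 1 := dep_of_mem_chF hc1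
  have hd2 : dep x c2 = dep x v + 1 := dep_of_mem_chF hc2
  -- wlog on depth: handle both directions of the parent relation
  rcases adj_dep_cases ht hadj with hd | hd
  · -- dep u2 + 1 = dep u1, so par u1 = u2
    have hp : par x u1 = u2 := par_eq_of ht hadj (by omega)
    have hne1 : u1 ≠ c1 := by
      intro h; subst h
      have := dep_le_of_mem_Des h2
      omega
    have : par x u1 ∈ Des x c1 := par_mem_Des ht h1 hne1
    rw [hp] at this
    have e1 := child_eq_of_mem_Des (v := v) hc1 this
    have e2 := child_eq_of_mem_Des (v := v) hc2 h2
    exact hne (by rw [← e1, ← e2])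
  · have hp : par x u2 = u1 := par_eq_of ht hadj.symm (by omega)
    have hne2 : u2 ≠ c2 := by
      intro h; subst h
      have := dep_le_of_mem_Des h1
      omega
    have : par x u2 ∈ Des x c2 := par_mem_Des ht h2 hne2
    rw [hp] at this
    have e1 := child_eq_of_mem_Des (v := v) hc1 h1
    have e2 := child_eq_of_mem_Des (v := v) hc2 this
    exact hne (by rw [← e1, ← e2])

/-- a strict descendant is adjacent to `v` iff it is a child of `v` -/
lemma adj_root_iff_child (ht : x.graph.IsTree) {v u : Fin x.n} (hu : u ∈ Des x v)
    (hne : u ≠ v) : x.graph.Adj v u ↔ u ∈ chF x v := by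
  constructor
  · intro hadj
    have hlt : dep x v < dep x u := dep_lt_of_mem_Des_ne hu hne
    rcases adj_dep_cases ht hadj with hd | hd
    · omega
    · exact (mem_chF_iff ht).mpr ⟨ne_root_of_dep_pos (by omega), par_eq_of ht hadj.symm hd⟩
  · exact adj_of_mem_chF

/-- degree bound on children of the root -/
lemma card_chF_root_le {r γ : ℕ} (hx : IsShortBoundedTree r γ x) :
    (chF x x.root).card ≤ γ := by
  have h1 : (↑(chF x x.root) : Set (Fin x.n)) ⊆ {u | x.graph.Adj x.root u} := by
    intro u hu
    exact adj_of_mem_chF hu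
  calc (chF x x.root).card = (↑(chF x x.root) : Set (Fin x.n)).ncard :=
        (Set.ncard_coe_finset _).symm
    _ ≤ {u | x.graph.Adj x.root u}.ncard := Set.ncard_le_ncard h1 (Set.toFinite _)
    _ ≤ γ := hx.2.2 x.root

/-- degree bound on children of a non-root vertex -/
lemma card_chF_le {r γ : ℕ} (hx : IsShortBoundedTree r γ x) {v : Fin x.n}
    (hv : v ≠ x.root) : (chF x v).card + 1 ≤ γ := by
  obtain ⟨hadj, hdep⟩ := par_spec hx.1 hv
  have hnm : par x v ∉ chF x v := by
    intro h
    have := dep_of_mem_chF h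
    omega
  have h1 : (↑(insert (par x v) (chF x v)) : Set (Fin x.n)) ⊆ {u | x.graph.Adj v u} := by
    intro u hu
    simp only [Finset.coe_insert, Set.mem_insert_iff, Finset.mem_coe] at hu
    rcases hu with rfl | hu
    · exact hadj
    · exact adj_of_mem_chF hu
  calc (chF x v).card + 1 = (insert (par x v) (chF x v)).card := by
        rw [Finset.card_insert_of_notMem hnm]
    _ = (↑(insert (par x v) (chF x v)) : Set (Fin x.n)).ncard := (Set.ncard_coe_finset _).symm
    _ ≤ {u | x.graph.Adj v u}.ncard := Set.ncard_le_ncard h1 (Set.toFinite _)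
    _ ≤ γ := hx.2.2 v

/-- graph isomorphisms preserve distances -/
lemma iso_dist_le (φ : x.graph ≃g y.graph) (hcx : x.graph.Connected) (a b : Fin x.n) :
    y.graph.dist (φ a) (φ b) ≤ x.graph.dist a b := by
  obtain ⟨W, hW⟩ := hcx.exists_walk_length_eq_dist a b
  calc y.graph.dist (φ a) (φ b) ≤ (W.map φ.toHom).length := SimpleGraph.dist_le _
    _ = W.length := SimpleGraph.Walk.length_map _ _
    _ = x.graph.dist a b := hW

lemma iso_dist (φ : x.graph ≃g y.graph) (hcx : x.graph.Connected)
    (hcy : y.graph.Connected) (a b : Fin x.n) :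
    y.graph.dist (φ a) (φ b) = x.graph.dist a b := by
  refine le_antisymm (iso_dist_le φ hcx a b) ?_
  have := iso_dist_le φ.symm hcy (φ a) (φ b)
  simpa using this

/-- graph isomorphisms preserve the codes -/
lemma iso_cd (htx : x.graph.IsTree) (hty : y.graph.IsTree) (φ : x.graph ≃g y.graph)
    (hroot : φ x.root = y.root) : ∀ (k : ℕ) (v : Fin x.n), cd y k (φ v) = cd x k v := by
  intro k
  induction k with
  | zero => intro v; rfl
  | succ k ih =>
    intro v
    show ((chF y (φ v)).val.map (cd y k) : Multiset (M k)) = (chF x v).val.map (cd x k)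
    have hdep : ∀ a : Fin x.n, dep y (φ a) = dep x a := by
      intro a
      show y.graph.dist y.root (φ a) = x.graph.dist x.root a
      rw [← hroot]
      exact iso_dist φ htx.isConnected hty.isConnected x.root a
    have hch : chF y (φ v) = (chF x v).map φ.toEquiv.toEmbedding := by
      ext u'
      rw [Finset.mem_map_equiv]
      show u' ∈ chF y (φ v) ↔ φ.symm u' ∈ chF x v
      simp only [chF, Finset.mem_filter, Finset.mem_univ, true_and]
      constructor
      · rintro ⟨hadj, hd⟩
        have : u' = φ (φ.symm u') := by simp
        rw [this] at hadj hd
        exact ⟨φ.map_adj_iff.mp (by simpa using hadj), by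
          rw [hdep (φ.symm u'), hdep v] at hd; exact hd⟩
      · rintro ⟨hadj, hd⟩
        have h2 : φ (φ.symm u') = u' := by simp
        have h1 : y.graph.Adj (φ v) (φ (φ.symm u')) := φ.map_adj_iff.mpr hadj
        rw [h2] at h1
        refine ⟨h1, ?_⟩
        have h3 := hdep (φ.symm u')
        rw [h2] at h3
        rw [h3, hd, hdep v]
    rw [hch, Finset.map_val, Multiset.map_map]
    exact Multiset.map_congr rfl fun a _ => ih a

end RTAux

namespace RTAux
open Set
open scoped Classical

/-- from a multiset relation, extract a bijection realizing it -/
lemma match_of_rel {α β : Type*} [Nonempty β] {R : α → β → Prop} :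
    ∀ {s : Multiset α} {t : Multiset β}, Multiset.Rel R s t → s.Nodup → t.Nodup →
      ∃ g : α → β, Set.BijOn g {a | a ∈ s} {b | b ∈ t} ∧ ∀ a ∈ s, R a (g a) := by
  intro s t h
  induction h with
  | zero =>
    intro _ _
    refine ⟨fun _ => Classical.arbitrary β, ?_, ?_⟩
    · have h1 : {a : α | a ∈ (0 : Multiset α)} = ∅ := by simp
      have h2 : {b : β | b ∈ (0 : Multiset β)} = ∅ := by simp
      rw [h1, h2]
      exact Set.bijOn_empty _
    · simp
  | @cons a b s t hab hrel ih =>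
    intro hs ht
    obtain ⟨ha, hs'⟩ := Multiset.nodup_cons.mp hs
    obtain ⟨hb, ht'⟩ := Multiset.nodup_cons.mp ht
    obtain ⟨g, hg, hR⟩ := ih hs' ht'
    refine ⟨Function.update g a b, ?_, ?_⟩
    · have hset1 : {x : α | x ∈ a ::ₘ s} = insert a {x | x ∈ s} := by
        ext z; simp [Multiset.mem_cons]
      have hset2 : {z : β | z ∈ b ::ₘ t} = insert b {z | z ∈ t} := by
        ext z; simp [Multiset.mem_cons]
      rw [hset1, hset2]
      have hgg : Set.BijOn (Function.update g a b) {x | x ∈ s} {z | z ∈ t} := by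
        refine hg.congr ?_
        intro z hz
        have : z ≠ a := fun h => ha (h ▸ hz)
        simp [Function.update_of_ne this]
      have := hgg.insert (a := a) (by
        rw [Function.update_self]; exact hb)
      rwa [Function.update_self] at this
    · intro z hz
      rcases Multiset.mem_cons.mp hz with rfl | hz'
      · rw [Function.update_self]; exact hab
      · have : z ≠ a := fun h => ha (h ▸ hz')
        rw [Function.update_of_ne this]
        exact hR z hz'

/-- counting bounded multisets over a finite set -/
lemma card_bounded_multisets {α : Type*} (S : Set α) (hS : S.Finite) (s : ℕ) :
    ({m : Multiset α | Multiset.card m ≤ s ∧ ∀ a ∈ m, a ∈ S}).Finite ∧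
      Nat.card ({m : Multiset α | Multiset.card m ≤ s ∧ ∀ a ∈ m, a ∈ S}) ≤
        (Nat.card S + 1) ^ s := by
  haveI : Finite ↥S := hS.to_subtype
  set T := {m : Multiset α | Multiset.card m ≤ s ∧ ∀ a ∈ m, a ∈ S} with hT
  set Φ : T → (Fin s → Option ↥S) := fun m i =>
    if h : (i : ℕ) < m.1.toList.length then
      some ⟨m.1.toList.get ⟨i, h⟩, m.2.2 _ (Multiset.mem_toList.mp (List.get_mem _ _))⟩
    else none with hΦ
  have hinj : Function.Injective Φ := by
    intro m1 m2 heq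
    have hl1 : m1.1.toList.length ≤ s := by
      rw [Multiset.length_toList]; exact m1.2.1
    have hl2 : m2.1.toList.length ≤ s := by
      rw [Multiset.length_toList]; exact m2.2.1
    have hlen : m1.1.toList.length = m2.1.toList.length := by
      by_contra hne
      rcases Nat.lt_or_ge m1.1.toList.length m2.1.toList.length with hlt | hge
      · have hfun := congrFun heq ⟨m1.1.toList.length, by omega⟩
        rw [hΦ] at hfun
        simp only at hfun
        rw [dif_neg (by omega), dif_pos (by simpa using hlt)] at hfun
        cases hfun
      · have hlt : m2.1.toList.length < m1.1.toList.length := by omega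
        have hfun := congrFun heq ⟨m2.1.toList.length, by omega⟩
        rw [hΦ] at hfun
        simp only at hfun
        rw [dif_pos (by simpa using hlt), dif_neg (by omega)] at hfun
        cases hfun
    have hlist : m1.1.toList = m2.1.toList := by
      refine List.ext_get hlen ?_
      intro i h1 h2
      have hfun := congrFun heq ⟨i, by omega⟩
      rw [hΦ] at hfun
      simp only at hfun
      rw [dif_pos (by simpa using h1), dif_pos (by simpa using h2)] at hfun
      have := Option.some.inj hfun
      exact congrArg Subtype.val this
    apply Subtype.ext
    calc m1.1 = ↑m1.1.toList := (Multiset.coe_toList _).symm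
      _ = ↑m2.1.toList := by rw [hlist]
      _ = m2.1 := Multiset.coe_toList _
  haveI : Finite (Option ↥S) := Finite.of_equiv (↥S ⊕ PUnit.{1}) (Equiv.optionEquivSumPUnit ↥S).symm
  haveI : Finite (Fin s → Option ↥S) := Pi.finite
  constructor
  · have : Finite T := Finite.of_injective Φ hinj
    exact Set.toFinite T
  · calc Nat.card T ≤ Nat.card (Fin s → Option ↥S) := Nat.card_le_card_of_injective Φ hinj
      _ = Nat.card (Option ↥S) ^ Nat.card (Fin s) := Nat.card_fun
      _ = Nat.card (Option ↥S) ^ s := by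
            congr 1
            simp [Nat.card_eq_fintype_card]
      _ = (Nat.card ↥S + 1) ^ s := by rw [Finite.card_option]

/-- counting multisets over a subsingleton type -/
lemma card_multisets_subsingleton {α : Type*} [Subsingleton α] [Nonempty α]
    (T : Set (Multiset α)) (s : ℕ) (hT : ∀ m ∈ T, Multiset.card m ≤ s) :
    Nat.card T ≤ s + 1 := by
  obtain ⟨a⟩ := ‹Nonempty α›
  have hinj : Function.Injective (fun m : T => (⟨Multiset.card m.1, by
      have := hT m.1 m.2; omega⟩ : Fin (s+1))) := by
    intro m1 m2 heq
    apply Subtype.ext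
    have hcard : Multiset.card m1.1 = Multiset.card m2.1 := by
      simpa using congrArg Fin.val heq
    have h1 : m1.1 = Multiset.replicate (Multiset.card m1.1) a :=
      Multiset.eq_replicate_card.mpr fun b _ => Subsingleton.elim b a
    have h2 : m2.1 = Multiset.replicate (Multiset.card m2.1) a :=
      Multiset.eq_replicate_card.mpr fun b _ => Subsingleton.elim b a
    rw [h1, h2, hcard]
  calc Nat.card T ≤ Nat.card (Fin (s+1)) := Nat.card_le_card_of_injective _ hinj
    _ = s + 1 := by rw [Nat.card_eq_fintype_card, Fintype.card_fin]

variable (γ : ℕ)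

/-- the set of "bounded" codes at level `k` -/
def Bd : (k : ℕ) → Set (M k)
  | 0 => Set.univ
  | k+1 => {m : Multiset (M k) | Multiset.card m ≤ γ - 1 ∧ ∀ a ∈ m, a ∈ Bd k}

instance : Subsingleton (M 0) := inferInstanceAs (Subsingleton PUnit)
instance : Nonempty (M 0) := inferInstanceAs (Nonempty PUnit)
instance : Finite (M 0) := inferInstanceAs (Finite PUnit.{1})

lemma Bd_finite : ∀ k, (Bd γ k).Finite
  | 0 => Set.finite_univ
  | k+1 => (card_bounded_multisets (Bd γ k) (Bd_finite k) (γ - 1)).1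

variable {γ}

lemma card_Bd (hγ : 2 ≤ γ) : ∀ k, 1 ≤ k → Nat.card (Bd γ k) + 1 ≤ γ ^ (2 * γ ^ (k - 1)) := by
  have pow_succ_le : ∀ a b : ℕ, a < b → γ ^ a + 1 ≤ γ ^ b := by
    intro a b hab
    calc γ ^ a + 1 ≤ γ ^ a + γ ^ a := by
          have : 1 ≤ γ ^ a := Nat.one_le_pow _ _ (by omega)
          omega
      _ = 2 * γ ^ a := by ring
      _ ≤ γ * γ ^ a := Nat.mul_le_mul_right _ hγ
      _ = γ ^ (a + 1) := by ring
      _ ≤ γ ^ b := Nat.pow_le_pow_right (by omega) (by omega)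
  intro k
  induction k with
  | zero => omega
  | succ k ih =>
    intro _
    rcases Nat.eq_zero_or_pos k with rfl | hk
    · -- k = 0 : Bd γ 1 consists of multisets over M 0 of size ≤ γ - 1
      have h1 : Nat.card (Bd γ 1) ≤ (γ - 1) + 1 :=
        card_multisets_subsingleton (Bd γ 1) (γ - 1) (fun m hm => hm.1)
      have h2 : γ + 1 ≤ γ ^ 2 := by nlinarith
      simp only [Nat.sub_self, pow_zero, mul_one]
      calc Nat.card (Bd γ 1) + 1 ≤ γ + 1 := by omega
        _ ≤ γ ^ 2 := h2
    · have ihk := ih hk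
      have h1 : Nat.card (Bd γ (k+1)) ≤ (Nat.card (Bd γ k) + 1) ^ (γ - 1) :=
        (card_bounded_multisets (Bd γ k) (Bd_finite γ k) (γ - 1)).2
      have h2 : (Nat.card (Bd γ k) + 1) ^ (γ - 1) ≤ (γ ^ (2 * γ ^ (k-1))) ^ (γ - 1) :=
        Nat.pow_le_pow_left ihk _
      rw [← pow_mul] at h2
      have h3 : 2 * γ ^ (k - 1) * (γ - 1) < 2 * γ ^ k := by
        have hp : 0 < γ ^ (k - 1) := Nat.pow_pos (by omega)
        have he : γ ^ (k - 1) * γ = γ ^ k := by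
          rw [← pow_succ]
          congr 1
          omega
        calc 2 * γ ^ (k-1) * (γ - 1) < 2 * γ ^ (k-1) * γ := by
              exact mul_lt_mul_of_pos_left (by omega) (by positivity)
          _ = 2 * γ ^ k := by rw [mul_assoc, he]
      have h4 : γ ^ (2 * γ ^ (k-1) * (γ - 1)) + 1 ≤ γ ^ (2 * γ ^ k) := pow_succ_le _ _ h3
      have : k + 1 - 1 = k := by omega
      rw [this]
      omega

end RTAux

namespace RTAux
open SimpleGraph Set
open scoped Classical
variable {x y : RootedGraph}

lemma main_ind (htx : x.graph.IsTree) (hty : y.graph.IsTree) :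
    ∀ (k : ℕ) (v : Fin x.n) (w : Fin y.n),
      (∀ u ∈ Des x v, dep x u ≤ dep x v + k) →
      (∀ u ∈ Des y w, dep y u ≤ dep y w + k) →
      cd x k v = cd y k w →
      ∃ f : Fin x.n → Fin y.n, f v = w ∧ Set.BijOn f (Des x v) (Des y w) ∧
        ∀ u1 ∈ Des x v, ∀ u2 ∈ Des x v,
          (x.graph.Adj u1 u2 ↔ y.graph.Adj (f u1) (f u2)) := by
  intro k
  induction k with
  | zero =>
    intro v w hbx hby _
    have hdx : Des x v = {v} := by
      ext u
      simp only [Set.mem_singleton_iff]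
      exact ⟨fun hu => eq_of_mem_Des_dep_le hu (by have := hbx u hu; omega),
        fun h => h ▸ mem_Des_self v⟩
    have hdy : Des y w = {w} := by
      ext u
      simp only [Set.mem_singleton_iff]
      exact ⟨fun hu => eq_of_mem_Des_dep_le hu (by have := hby u hu; omega),
        fun h => h ▸ mem_Des_self w⟩
    refine ⟨fun _ => w, rfl, ?_, ?_⟩
    · rw [hdx, hdy]
      exact Set.bijOn_singleton.mpr rfl
    · intro u1 hu1 u2 hu2
      rw [hdx, Set.mem_singleton_iff] at hu1 hu2
      subst hu1; subst hu2
      simp [x.graph.irrefl, y.graph.irrefl]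
  | succ k ih =>
    intro v w hbx hby hcd
    haveI : Nonempty (Fin y.n) := ⟨y.root⟩
    -- a matching between the children of `v` and of `w` with equal codes
    have hrel : Multiset.Rel (fun a b => cd x k a = cd y k b) (chF x v).val (chF y w).val :=
      Multiset.rel_map.mp (Multiset.rel_eq.mpr hcd)
    obtain ⟨g, hgbij, hgcd⟩ := match_of_rel hrel (chF x v).nodup (chF y w).nodup
    have hgmem : ∀ c ∈ chF x v, g c ∈ chF y w := fun c hc => hgbij.mapsTo hc
    -- choose compatible bijections on child subtrees
    have hFF : ∀ c : Fin x.n, ∃ fc : Fin x.n → Fin y.n, c ∈ chF x v →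
        (fc c = g c ∧ Set.BijOn fc (Des x c) (Des y (g c)) ∧
          ∀ u1 ∈ Des x c, ∀ u2 ∈ Des x c,
            (x.graph.Adj u1 u2 ↔ y.graph.Adj (fc u1) (fc u2))) := by
      intro c
      by_cases hc : c ∈ chF x v
      · have hdc : dep x c = dep x v + 1 := dep_of_mem_chF hc
        have hdgc : dep y (g c) = dep y w + 1 := dep_of_mem_chF (hgmem c hc)
        have hbx' : ∀ u ∈ Des x c, dep x u ≤ dep x c + k := by
          intro u hu
          have := hbx u (Des_child_subset htx hc hu)
          omega
        have hby' : ∀ u ∈ Des y (g c), dep y u ≤ dep y (g c) + k := by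
          intro u hu
          have := hby u (Des_child_subset hty (hgmem c hc) hu)
          omega
        obtain ⟨fc, h1, h2, h3⟩ := ih c (g c) hbx' hby' (hgcd c hc)
        exact ⟨fc, fun _ => ⟨h1, h2, h3⟩⟩
      · exact ⟨fun _ => y.root, fun h => absurd h hc⟩
    choose FF hFF using hFF
    -- the global function
    set f : Fin x.n → Fin y.n :=
      fun u => if u = v then w else FF ((par x)^[dep x u - dep x v - 1] u) u with hf
    -- notation for "the child above u"
    have hchild : ∀ u ∈ Des x v, u ≠ v →
        (par x)^[dep x u - dep x v - 1] u ∈ chF x v ∧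
          u ∈ Des x ((par x)^[dep x u - dep x v - 1] u) := fun u hu hne =>
      exists_child htx hu hne
    have hfval : ∀ (c : Fin x.n), c ∈ chF x v → ∀ u ∈ Des x c, f u = FF c u := by
      intro c hc u hu
      have hne : u ≠ v := by
        intro h
        have h1 := dep_le_of_mem_Des hu
        have h2 := dep_of_mem_chF hc
        rw [h] at h1
        omega
      rw [hf]
      simp only
      rw [if_neg hne, child_eq_of_mem_Des (v := v) hc hu]
    -- image of a child subtree avoids w
    have himg : ∀ (c : Fin x.n), c ∈ chF x v → ∀ u ∈ Des x c, f u ∈ Des y (g c) := by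
      intro c hc u hu
      rw [hfval c hc u hu]
      exact (hFF c hc).2.1.mapsTo hu
    have hne_w : ∀ (c : Fin x.n), c ∈ chF x v → ∀ u ∈ Des x c, f u ≠ w := by
      intro c hc u hu h
      have h1 := dep_le_of_mem_Des (himg c hc u hu)
      have h2 := dep_of_mem_chF (hgmem c hc)
      rw [h] at h1
      omega
    have hfv : f v = w := by rw [hf]; simp
    refine ⟨f, hfv, ⟨?_, ?_, ?_⟩, ?_⟩
    · -- MapsTo
      intro u hu
      by_cases hne : u = v
      · subst hne; rw [hfv]; exact mem_Des_self w
      · obtain ⟨hc, hu'⟩ := hchild u hu hne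
        exact Des_child_subset hty (hgmem _ hc) (himg _ hc u hu')
    · -- InjOn
      intro u1 hu1 u2 hu2 heq
      by_cases h1 : u1 = v <;> by_cases h2 : u2 = v
      · rw [h1, h2]
      · subst h1
        obtain ⟨hc2, hu2'⟩ := hchild u2 hu2 h2
        exact absurd heq.symm (by rw [hfv]; exact hne_w _ hc2 u2 hu2')
      · subst h2
        obtain ⟨hc1, hu1'⟩ := hchild u1 hu1 h1
        exact absurd heq (by rw [hfv]; exact hne_w _ hc1 u1 hu1')
      · obtain ⟨hc1, hu1'⟩ := hchild u1 hu1 h1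
        obtain ⟨hc2, hu2'⟩ := hchild u2 hu2 h2
        set c1 := (par x)^[dep x u1 - dep x v - 1] u1
        set c2 := (par x)^[dep x u2 - dep x v - 1] u2
        by_cases hcc : c1 = c2
        · rw [← hcc] at hu2'
          apply (hFF c1 hc1).2.1.injOn hu1' hu2'
          rw [← hfval c1 hc1 u1 hu1', ← hfval c1 hc1 u2 hu2']
          exact heq
        · exfalso
          have hm1 : f u1 ∈ Des y (g c1) := himg _ hc1 u1 hu1'
          have hm2 : f u2 ∈ Des y (g c2) := himg _ hc2 u2 hu2'
          rw [heq] at hm1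
          have e1 := child_eq_of_mem_Des (v := w) (hgmem _ hc1) hm1
          have e2 := child_eq_of_mem_Des (v := w) (hgmem _ hc2) hm2
          have : g c1 = g c2 := by rw [← e1, ← e2]
          exact hcc (hgbij.injOn hc1 hc2 this)
    · -- SurjOn
      intro t ht
      by_cases hne : t = w
      · exact ⟨v, mem_Des_self v, by rw [hfv, hne]⟩
      · obtain ⟨hc', ht'⟩ := exists_child hty ht hne
        set c' := (par y)^[dep y t - dep y w - 1] t
        obtain ⟨c, hc0, hgc⟩ := hgbij.surjOn hc'
        have hc : c ∈ chF x v := hc0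
        obtain ⟨u, hu, hfu⟩ := (hFF c hc).2.1.surjOn (by rw [hgc]; exact ht')
        refine ⟨u, Des_child_subset htx hc hu, ?_⟩
        rw [hfval c hc u hu]
        exact hfu
    · -- adjacency
      intro u1 hu1 u2 hu2
      by_cases h1 : u1 = v <;> by_cases h2 : u2 = v
      · rw [h1, h2, hfv]
        simp [x.graph.irrefl, y.graph.irrefl]
      · -- u1 = v, u2 strict descendant
        rw [h1, hfv]
        obtain ⟨hc2, hu2'⟩ := hchild u2 hu2 h2
        set c2 := (par x)^[dep x u2 - dep x v - 1] u2
        rw [adj_root_iff_child htx hu2 h2,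
          adj_root_iff_child hty (Des_child_subset hty (hgmem _ hc2) (himg _ hc2 u2 hu2'))
            (hne_w _ hc2 u2 hu2')]
        constructor
        · intro hch2
          have hce : c2 = u2 := child_eq_of_mem_Des (v := v) hch2 (mem_Des_self u2)
          rw [hfval c2 hc2 u2 hu2', hce, (hFF u2 (hce ▸ hc2)).1]
          exact hgmem u2 (hce ▸ hc2)
        · intro hch2'
          have hd : dep y (f u2) = dep y w + 1 := dep_of_mem_chF hch2'
          have hd2 : dep y (g c2) = dep y w + 1 := dep_of_mem_chF (hgmem _ hc2)
          have heqg : f u2 = g c2 :=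
            eq_of_mem_Des_dep_le (himg _ hc2 u2 hu2') (by omega)
          have hgc : f u2 = FF c2 u2 := hfval c2 hc2 u2 hu2'
          have hcc2 : FF c2 c2 = g c2 := (hFF c2 hc2).1
          have hu2c : u2 = c2 := by
            apply (hFF c2 hc2).2.1.injOn hu2' (mem_Des_self c2)
            rw [hcc2, ← heqg, hgc]
          rw [hu2c]
          exact hc2
      · -- u2 = v, u1 strict descendant: symmetric
        rw [h2, hfv, x.graph.adj_comm u1 v, y.graph.adj_comm (f u1) w]
        obtain ⟨hc1, hu1'⟩ := hchild u1 hu1 h1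
        set c1 := (par x)^[dep x u1 - dep x v - 1] u1
        rw [adj_root_iff_child htx hu1 h1,
          adj_root_iff_child hty (Des_child_subset hty (hgmem _ hc1) (himg _ hc1 u1 hu1'))
            (hne_w _ hc1 u1 hu1')]
        constructor
        · intro hch1
          have hce : c1 = u1 := child_eq_of_mem_Des (v := v) hch1 (mem_Des_self u1)
          rw [hfval c1 hc1 u1 hu1', hce, (hFF u1 (hce ▸ hc1)).1]
          exact hgmem u1 (hce ▸ hc1)
        · intro hch1'
          have hd : dep y (f u1) = dep y w + 1 := dep_of_mem_chF hch1'
          have hd2 : dep y (g c1) = dep y w + 1 := dep_of_mem_chF (hgmem _ hc1)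
          have heqg : f u1 = g c1 :=
            eq_of_mem_Des_dep_le (himg _ hc1 u1 hu1') (by omega)
          have hgc : f u1 = FF c1 u1 := hfval c1 hc1 u1 hu1'
          have hcc1 : FF c1 c1 = g c1 := (hFF c1 hc1).1
          have hu1c : u1 = c1 := by
            apply (hFF c1 hc1).2.1.injOn hu1' (mem_Des_self c1)
            rw [hcc1, ← heqg, hgc]
          rw [hu1c]
          exact hc1
      · -- both strict descendants
        obtain ⟨hc1, hu1'⟩ := hchild u1 hu1 h1
        obtain ⟨hc2, hu2'⟩ := hchild u2 hu2 h2
        set c1 := (par x)^[dep x u1 - dep x v - 1] u1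
        set c2 := (par x)^[dep x u2 - dep x v - 1] u2
        by_cases hcc : c1 = c2
        · rw [← hcc] at hu2'
          rw [hfval c1 hc1 u1 hu1', hfval c1 hc1 u2 hu2']
          exact (hFF c1 hc1).2.2 u1 hu1' u2 hu2'
        · constructor
          · intro hadj
            exact absurd hadj (not_adj_of_distinct_subtrees htx hc1 hc2 hcc hu1' hu2')
          · intro hadj
            exfalso
            have hg12 : g c1 ≠ g c2 := fun h => hcc (hgbij.injOn hc1 hc2 h)
            exact not_adj_of_distinct_subtrees hty (hgmem _ hc1) (hgmem _ hc2) hg12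
              (himg _ hc1 u1 hu1') (himg _ hc2 u2 hu2') hadj

end RTAux

namespace RTAux
open SimpleGraph Set
open scoped Classical
variable {x y : RootedGraph}

/-- completeness: equal codes imply rooted isomorphism -/
lemma complete {r γ : ℕ} (hx : IsShortBoundedTree r γ x) (hy : IsShortBoundedTree r γ y)
    (h : cd x r x.root = cd y r y.root) : RootedIso x y := by
  have htx := hx.1
  have hty := hy.1
  obtain ⟨f, hfr, hbij, hadj⟩ := main_ind htx hty r x.root y.root
    (fun u _ => by
      have h1 := hx.2.1 u
      have h2 := dep_root (x := x)
      have h3 : dep x u = x.graph.dist x.root u := rfl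
      omega)
    (fun u _ => by
      have h1 := hy.2.1 u
      have h2 := dep_root (x := y)
      have h3 : dep y u = y.graph.dist y.root u := rfl
      omega) h
  rw [Des_root htx, Des_root hty] at hbij
  rw [Des_root htx] at hadj
  have hinj : Function.Injective f := Set.injOn_univ.mp hbij.injOn
  have hsurj : Function.Surjective f := Set.surjOn_univ.mp hbij.surjOn
  refine ⟨⟨Equiv.ofBijective f ⟨hinj, hsurj⟩, ?_⟩, hfr⟩
  intro a b
  exact (hadj a (Set.mem_univ a) b (Set.mem_univ b)).symm

/-- codes of non-root vertices are bounded -/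
lemma cd_mem_Bd {r γ : ℕ} (hx : IsShortBoundedTree r γ x) :
    ∀ (k : ℕ) (v : Fin x.n), v ≠ x.root → cd x k v ∈ Bd γ k := by
  intro k
  induction k with
  | zero => intro v _; exact Set.mem_univ _
  | succ k ih =>
    intro v hv
    refine ⟨?_, ?_⟩
    · show Multiset.card ((chF x v).val.map (cd x k)) ≤ γ - 1
      rw [Multiset.card_map]
      have h1 := card_chF_le hx hv
      have h2 : (chF x v).card = Multiset.card (chF x v).val := rfl
      omega
    · intro a ha
      obtain ⟨c, hc, rfl⟩ :=
        Multiset.mem_map.mp (show a ∈ (chF x v).val.map (cd x k) from ha)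
      have hcm : c ∈ chF x v := hc
      have hd := dep_of_mem_chF hcm
      exact ih c (ne_root_of_dep_pos (by omega))

end RTAux

/-- the counting bound from the proof of Theorem 3.1.
For all integers `r ≥ 1` and `γ ≥ 2`, the number of isomorphism classes of finite rooted
trees with height at most `r` and maximum degree at most `γ` is at most `γ^{2·γ^{r-1}}`:
the quotient of the type of such rooted trees by rooted isomorphism is finite, of
cardinality at most `γ^{2·γ^{r-1}}`. -/
theorem card_rooted_trees_le (r γ : ℕ) (hr : 1 ≤ r) (hγ : 2 ≤ γ) :
    Finite (Quot fun x y : {z : RootedGraph // IsShortBoundedTree r γ z} =>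
        RootedIso x.1 y.1) ∧
      Nat.card (Quot fun x y : {z : RootedGraph // IsShortBoundedTree r γ z} =>
        RootedIso x.1 y.1) ≤ γ ^ (2 * γ ^ (r - 1)) := by
  classical
  obtain ⟨r', rfl⟩ : ∃ r', r = r' + 1 := ⟨r - 1, by omega⟩
  have hBTfin : ({m : Multiset (RTAux.M r') | Multiset.card m ≤ γ ∧
      ∀ a ∈ m, a ∈ RTAux.Bd γ r'}).Finite :=
    (RTAux.card_bounded_multisets _ (RTAux.Bd_finite γ r') γ).1
  haveI := hBTfin.to_subtype
  have hmem : ∀ z : {z : RootedGraph // IsShortBoundedTree (r'+1) γ z},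
      (RTAux.cd z.1 (r'+1) z.1.root : Multiset (RTAux.M r')) ∈
        {m : Multiset (RTAux.M r') | Multiset.card m ≤ γ ∧ ∀ a ∈ m, a ∈ RTAux.Bd γ r'} := by
    intro z
    constructor
    · show Multiset.card ((RTAux.chF z.1 z.1.root).val.map (RTAux.cd z.1 r')) ≤ γ
      rw [Multiset.card_map]
      exact RTAux.card_chF_root_le z.2
    · intro a ha
      obtain ⟨c, hc, rfl⟩ := Multiset.mem_map.mp
        (show a ∈ (RTAux.chF z.1 z.1.root).val.map (RTAux.cd z.1 r') from ha)
      apply RTAux.cd_mem_Bd z.2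
      have hcm : c ∈ RTAux.chF z.1 z.1.root := hc
      have hd := RTAux.dep_of_mem_chF hcm
      have hdr := RTAux.dep_root (x := z.1)
      exact RTAux.ne_root_of_dep_pos (by omega)
  have hlift : ∀ z1 z2 : {z : RootedGraph // IsShortBoundedTree (r'+1) γ z},
      RootedIso z1.1 z2.1 →
      RTAux.cd z1.1 (r'+1) z1.1.root = RTAux.cd z2.1 (r'+1) z2.1.root := by
    rintro z1 z2 ⟨φ, hφ⟩
    have := RTAux.iso_cd z1.2.1 z2.2.1 φ hφ (r'+1) z1.1.root
    rw [hφ] at this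
    exact this.symm
  set J : (Quot fun x y : {z : RootedGraph // IsShortBoundedTree (r'+1) γ z} =>
        RootedIso x.1 y.1) →
      ↥{m : Multiset (RTAux.M r') | Multiset.card m ≤ γ ∧ ∀ a ∈ m, a ∈ RTAux.Bd γ r'} :=
    Quot.lift (fun z => ⟨RTAux.cd z.1 (r'+1) z.1.root, hmem z⟩)
      (fun z1 z2 h => Subtype.ext (hlift z1 z2 h)) with hJ
  have hJinj : Function.Injective J := by
    intro q1 q2 h
    obtain ⟨z1, rfl⟩ := Quot.exists_rep q1
    obtain ⟨z2, rfl⟩ := Quot.exists_rep q2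
    apply Quot.sound
    rw [hJ] at h
    exact RTAux.complete z1.2 z2.2 (Subtype.ext_iff.mp h)
  constructor
  · exact Finite.of_injective J hJinj
  · have h1 := Nat.card_le_card_of_injective J hJinj
    have h2 : Nat.card ↥{m : Multiset (RTAux.M r') | Multiset.card m ≤ γ ∧
        ∀ a ∈ m, a ∈ RTAux.Bd γ r'} ≤ γ ^ (2 * γ ^ (r' + 1 - 1)) := by
      rcases Nat.eq_zero_or_pos r' with rfl | hr'
      · have hcard := RTAux.card_multisets_subsingleton
          {m : Multiset (RTAux.M 0) | Multiset.card m ≤ γ ∧ ∀ a ∈ m, a ∈ RTAux.Bd γ 0} γ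
          (fun m hm => hm.1)
        have hγ2 : γ + 1 ≤ γ ^ 2 := by nlinarith
        have : (2 : ℕ) * γ ^ (0 + 1 - 1) = 2 := by simp
        rw [this]
        calc Nat.card _ ≤ γ + 1 := hcard
          _ ≤ γ ^ 2 := hγ2
      · have hb := (RTAux.card_bounded_multisets _ (RTAux.Bd_finite γ r') γ).2
        have hBd := RTAux.card_Bd hγ r' hr'
        calc Nat.card ↥{m : Multiset (RTAux.M r') | Multiset.card m ≤ γ ∧
              ∀ a ∈ m, a ∈ RTAux.Bd γ r'}
            ≤ (Nat.card (RTAux.Bd γ r') + 1) ^ γ := hb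
          _ ≤ (γ ^ (2 * γ ^ (r' - 1))) ^ γ := Nat.pow_le_pow_left hBd γ
          _ = γ ^ (2 * γ ^ (r' - 1) * γ) := by rw [← pow_mul]
          _ = γ ^ (2 * γ ^ (r' + 1 - 1)) := by
              congr 1
              rw [mul_assoc, ← pow_succ]
              congr 2
              omega
    exact le_trans h1 h2
end
end

section
/- For c > 0 let y = y(c) be the smallest solution in (0,1) of y = exp(-c·exp(-c·y)), and set F(c) = 1 - (y + exp(-c·y) + c·y·exp(-c·y))/2. Then F(c) → 1/2 as c → ∞; that is, for every ε > 0 there exists c_0 > 0 such that for all c ≥ c_0, and any y ∈ (0,1) satisfying y = exp(-c·exp(-c·y)) and y ≤ z for every z ∈ (0,1) with z = exp(-c·exp(-c·z)), one has |1 - (y + exp(-c·y) + c·y·exp(-c·y))/2 - 1/2| ≤ ε. -/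
set_option maxHeartbeats 1000000 in
/-- `F(c) → 1/2` as `c → ∞`, where `F(c) = 1 - (y + e^{-cy} + cy·e^{-cy})/2`
and `y = y(c)` is the smallest solution in `(0,1)` of `y = exp(-c·exp(-c·y))`. -/
theorem F_tendsto_half :
    ∀ ε : ℝ, 0 < ε → ∃ c₀ : ℝ, 0 < c₀ ∧ ∀ c : ℝ, c₀ ≤ c →
      ∀ y : ℝ, 0 < y → y < 1 →
        y = Real.exp (-c * Real.exp (-c * y)) →
        (∀ z : ℝ, 0 < z → z < 1 → z = Real.exp (-c * Real.exp (-c * z)) → y ≤ z) →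
        |1 - (y + Real.exp (-c * y) + c * y * Real.exp (-c * y)) / 2 - 1 / 2| ≤ ε := by
  intro ε hε
  refine ⟨max 100 (9 / Real.sqrt ε), lt_of_lt_of_le (by norm_num) (le_max_left _ _), ?_⟩
  intro c hc y hy0 hy1 hyeq hymin
  have hc100 : (100:ℝ) ≤ c := le_trans (le_max_left _ _) hc
  have hcpos : (0:ℝ) < c := by linarith
  have hsε : 0 < Real.sqrt ε := Real.sqrt_pos.mpr hε
  have hc9 : 9 / Real.sqrt ε ≤ c := le_trans (le_max_right _ _) hc
  have hc9' : 9 ≤ c * Real.sqrt ε := by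
    rw [div_le_iff₀ hsε] at hc9; linarith
  have hεc : 81 ≤ ε * c ^ 2 := by
    nlinarith [Real.sq_sqrt hε.le, Real.sqrt_nonneg ε]
  -- exp c ≥ (c/3)^3
  have hcube : (c/3)^3 ≤ Real.exp c := by
    have h1 := Real.add_one_le_exp (c/3)
    have h2 : Real.exp c = (Real.exp (c/3))^3 := by
      rw [← Real.exp_nat_mul]; norm_num; ring_nf
    have h3 : (c/3)^3 ≤ (c/3+1)^3 := by
      apply pow_le_pow_left₀ (by positivity) (by linarith)
    have h4 : (c/3+1)^3 ≤ (Real.exp (c/3))^3 := by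
      apply pow_le_pow_left₀ (by positivity) h1
    linarith
  have hexp_neg : Real.exp (-c) ≤ 27 / c^3 := by
    rw [Real.exp_neg, inv_le_iff_one_le_mul₀ (Real.exp_pos c),
      ← div_le_iff₀' (by positivity : (0:ℝ) < 27 / c^3)]
    calc (1:ℝ) / (27 / c^3) = (c/3)^3 := by field_simp; ring
    _ ≤ Real.exp c := hcube
  set a := Real.exp (-c) with ha
  have hapos : 0 < a := Real.exp_pos _
  have hc3 : (100:ℝ)^3 ≤ c^3 := by nlinarith
  have hb1 : 2*a < 1 := by
    have : a ≤ 27 / c^3 := hexp_neg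
    have : 27 / c^3 ≤ 27 / 100^3 := by
      apply div_le_div_of_nonneg_left (by norm_num) (by norm_num) hc3
    nlinarith
  -- existence of a small fixed point in [a, 2a]
  have hcont : ContinuousOn (fun t => Real.exp (-c * Real.exp (-c * t)) - t)
      (Set.Icc a (2*a)) := by fun_prop
  have hfa : 0 ≤ Real.exp (-c * Real.exp (-c * a)) - a := by
    have h1 : Real.exp (-c * a) ≤ 1 := Real.exp_le_one_iff.mpr (by nlinarith)
    have h2 : Real.exp (-c) ≤ Real.exp (-c * Real.exp (-c*a)) :=
      Real.exp_le_exp.mpr (by nlinarith)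
    linarith
  have hfb : Real.exp (-c * Real.exp (-c * (2*a))) - 2*a ≤ 0 := by
    have h2a : (2:ℝ)*a = Real.exp (Real.log 2 - c) := by
      rw [Real.exp_sub, Real.exp_log (by norm_num : (0:ℝ) < 2), ha, Real.exp_neg]
      ring
    rw [sub_nonpos]
    have hkey : -c * Real.exp (-c * (2*a)) ≤ Real.log 2 - c := by
      have h1 : -c * (2*a) + 1 ≤ Real.exp (-c * (2*a)) := Real.add_one_le_exp _
      have hlog2 : (0.6931471803:ℝ) < Real.log 2 := Real.log_two_gt_d9
      have hca : c^2 * a ≤ 27 / c := by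
        have : c^2 * a ≤ c^2 * (27 / c^3) := by nlinarith
        calc c^2 * a ≤ c^2 * (27 / c^3) := this
        _ = 27 / c := by field_simp
      have h54 : 27 / c ≤ 27 / 100 := by
        apply div_le_div_of_nonneg_left (by norm_num) (by norm_num) hc100
      nlinarith
    calc Real.exp (-c * Real.exp (-c * (2*a))) ≤ Real.exp (Real.log 2 - c) :=
          Real.exp_le_exp.mpr hkey
    _ = 2*a := h2a.symm
  have hex : ∃ z ∈ Set.Icc a (2*a),
      Real.exp (-c * Real.exp (-c * z)) - z = 0 := by
    have hsub := intermediate_value_Icc' (by linarith : a ≤ 2*a) hcont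
    have h0 : (0:ℝ) ∈ Set.Icc (Real.exp (-c * Real.exp (-c * (2*a))) - 2*a)
        (Real.exp (-c * Real.exp (-c * a)) - a) := ⟨hfb, hfa⟩
    obtain ⟨z, hz, hz0⟩ := hsub h0
    exact ⟨z, hz, hz0⟩
  obtain ⟨z, ⟨hza, hzb⟩, hz0⟩ := hex
  have hz0' : z = Real.exp (-c * Real.exp (-c * z)) := by linarith
  have hzpos : 0 < z := lt_of_lt_of_le hapos hza
  have hz1 : z < 1 := lt_of_le_of_lt hzb hb1
  have hyz : y ≤ z := hymin z hzpos hz1 hz0'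
  have hy2a : y ≤ 2*a := le_trans hyz hzb
  -- final bound
  have hya : y ≤ 54 / c^3 := by
    have h : 2*(27/c^3) = 54/c^3 := by ring
    linarith
  set u := c * y with hu
  have hupos : 0 < u := by positivity
  have hub : u ≤ 54 / c^2 := by
    have : c * y ≤ c * (54 / c^3) := by nlinarith
    calc u = c * y := rfl
    _ ≤ c * (54 / c^3) := this
    _ = 54 / c^2 := by field_simp
  have hE1 : Real.exp (-u) ≤ 1 := Real.exp_le_one_iff.mpr (by linarith)
  have hE2 : 1 - u ≤ Real.exp (-u) := by
    have := Real.add_one_le_exp (-u); linarith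
  have hEpos : 0 < Real.exp (-u) := Real.exp_pos _
  have hyc2 : y ≤ 1 / c^2 := by
    have : 54 / c^3 ≤ 1 / c^2 := by
      rw [div_le_div_iff₀ (by positivity) (by positivity)]; nlinarith
    linarith
  rw [show -c * y = -u by ring, abs_le]
  have huE : u * Real.exp (-u) ≤ u := mul_le_of_le_one_right hupos.le hE1
  have huE0 : 0 ≤ u * Real.exp (-u) := by positivity
  constructor
  · have h1 : 1 - (y + Real.exp (-u) + u * Real.exp (-u)) ≥ -(y + u) := by linarith
    have h2 : y + u ≤ 55 / c^2 := by
      have h : 1 / c^2 + 54 / c^2 = 55 / c^2 := by ring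
      linarith
    have h3 : 55 / c^2 ≤ ε := by
      rw [div_le_iff₀ (by positivity)]; nlinarith
    linarith
  · have h1 : 1 - (y + Real.exp (-u) + u * Real.exp (-u)) ≤ u := by linarith
    have h3 : 54 / c^2 ≤ ε := by
      rw [div_le_iff₀ (by positivity)]; nlinarith
    linarith
end
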